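/- arXiv:1012.3826 — 4 statements merged into one kernel-verified Lean document; each statement's English description precedes it below -/
import Mathlib

section
/- (Up-step contiguity in a_{1k}.) Fix k with 1 ≤ k ≤ n and set Ψ(x) = Φ(α − e_k, δ; x) = ∫_a^b t^{−δ−1} (x_{1k}+x_{2k}t)^{α_k−1} ∏_{j≠k} (x_{1j}+x_{2j}t)^{α_j} dt. Then at every point x with all coordinates positive, Σ_{i≠k} (x_{1i}x_{2k} − x_{1k}x_{2i})·∂Ψ/∂x_{2i}(x) + (Σ_{i=1}^n α_i)·x_{1k}·Ψ(x) = (Σ_{i=1}^n α_i − δ)·Φ(α,δ;x) − [g(t,x)]_{t=a}^{t=b}. -/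
open Complex Function

/-- Partial derivative of `f` with respect to the coordinate `p`. -/
noncomputable def pd {n : ℕ} (p : Fin 2 × Fin n)
    (f : ((Fin 2 × Fin n) → ℝ) → ℂ) (x : (Fin 2 × Fin n) → ℝ) : ℂ :=
  deriv (fun s : ℝ => f (Function.update x p s)) (x p)

/-- `Φ(α,δ;x) = ∫_a^b t^(−δ−1) ∏ₖ (x_{1k} + x_{2k} t)^{α_k} dt`; the first row
of `x` is indexed by `0 : Fin 2`, the second row by `1 : Fin 2`. -/
noncomputable def Phi {n : ℕ} (α : Fin n → ℂ) (δ : ℂ) (a b : ℝ)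
    (x : (Fin 2 × Fin n) → ℝ) : ℂ :=
  ∫ t in a..b, (t : ℂ) ^ (-δ - 1)
    * ∏ k, ((x (0, k) : ℂ) + (x (1, k) : ℂ) * (t : ℂ)) ^ (α k)

/-- `g(t,x) = t^(−δ) ∏ₖ (x_{1k} + x_{2k} t)^{α_k}`. -/
noncomputable def gfun {n : ℕ} (α : Fin n → ℂ) (δ : ℂ) (t : ℝ)
    (x : (Fin 2 × Fin n) → ℝ) : ℂ :=
  (t : ℂ) ^ (-δ) * ∏ k, ((x (0, k) : ℂ) + (x (1, k) : ℂ) * (t : ℂ)) ^ (α k)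

open Set MeasureTheory intervalIntegral

lemma slit_aff {c d t : ℝ} (h : 0 < c + d * t) :
    ((c : ℂ) + (d : ℂ) * (t : ℂ)) ∈ Complex.slitPlane := by
  have : ((c : ℂ) + (d : ℂ) * (t : ℂ)) = ((c + d * t : ℝ) : ℂ) := by push_cast; ring
  rw [this]
  exact Complex.ofReal_mem_slitPlane.2 h

lemma contOn_cpow_aff (c d : ℝ) (w : ℂ) {s : Set ℝ} (h : ∀ t ∈ s, 0 < c + d * t) :
    ContinuousOn (fun t : ℝ => ((c : ℂ) + (d : ℂ) * (t : ℂ)) ^ w) s := by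
  apply ContinuousOn.cpow _ continuousOn_const (fun t ht => slit_aff (h t ht))
  fun_prop

lemma contOn_cpow_id (w : ℂ) {s : Set ℝ} (h : ∀ t ∈ s, 0 < t) :
    ContinuousOn (fun t : ℝ => (t : ℂ) ^ w) s := by
  apply ContinuousOn.cpow _ continuousOn_const
  · intro t ht; exact Complex.ofReal_mem_slitPlane.2 (h t ht)
  · fun_prop

lemma hasDerivAt_cpow_aff {c t : ℝ} (s : ℝ) (w : ℂ) (h : 0 < c + s * t) :
    HasDerivAt (fun s : ℝ => ((c : ℂ) + (s : ℂ) * (t : ℂ)) ^ w)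
      (w * ((c : ℂ) + (s : ℂ) * (t : ℂ)) ^ (w - 1) * t) s := by
  have h1 : HasDerivAt (fun z : ℂ => ((c : ℂ) + z * (t : ℂ)) ^ w)
      (w * ((c : ℂ) + (s : ℂ) * (t : ℂ)) ^ (w - 1) * t) (s : ℂ) := by
    have hb : HasDerivAt (fun z : ℂ => (c : ℂ) + z * (t : ℂ)) (t : ℂ) (s : ℂ) := by
      simpa using ((hasDerivAt_id (s : ℂ)).mul_const (t : ℂ)).const_add (c : ℂ)
    simpa using hb.cpow_const (slit_aff h)
  exact h1.comp_ofReal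

lemma contOn_prodfn {n : ℕ} (x : (Fin 2 × Fin n) → ℝ) (hx : ∀ p, 0 < x p)
    (γ : Fin n → ℂ) (u : Finset (Fin n)) {s : Set ℝ} (h : ∀ t ∈ s, 0 < t) :
    ContinuousOn (fun t : ℝ =>
      ∏ j ∈ u, ((x (0, j) : ℂ) + (x (1, j) : ℂ) * (t : ℂ)) ^ (γ j)) s := by
  apply continuousOn_finset_prod
  intro j _
  exact contOn_cpow_aff _ _ _ (fun t ht =>
    add_pos (hx (0, j)) (mul_pos (hx (1, j)) (h t ht)))

set_option maxHeartbeats 1000000 in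
lemma pd_phi {n : ℕ} (γ : Fin n → ℂ) (δ : ℂ) (a b : ℝ) (ha : 0 < a) (hab : a < b)
    (i : Fin n) (x : (Fin 2 × Fin n) → ℝ) (hx : ∀ p, 0 < x p) :
    pd (1, i) (Phi γ δ a b) x
      = ∫ t in a..b, (t : ℂ) ^ (-δ - 1) *
          ((γ i * ((x (0, i) : ℂ) + (x (1, i) : ℂ) * (t : ℂ)) ^ (γ i - 1) * (t : ℂ))
            * ∏ j ∈ Finset.univ.erase i,
                ((x (0, j) : ℂ) + (x (1, j) : ℂ) * (t : ℂ)) ^ (γ j)) := by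
  have h01 : (0 : Fin 2) ≠ 1 := by decide
  set x₀ := x (1, i) with hx₀
  set c := x (0, i) with hc
  have x₀pos : 0 < x₀ := hx _
  have cpos : 0 < c := hx _
  set F : ℝ → ℝ → ℂ := fun s t => (t : ℂ) ^ (-δ - 1) *
    (((c : ℂ) + (s : ℂ) * (t : ℂ)) ^ (γ i) *
      ∏ j ∈ Finset.univ.erase i, ((x (0, j) : ℂ) + (x (1, j) : ℂ) * (t : ℂ)) ^ (γ j)) with hF
  set F' : ℝ → ℝ → ℂ := fun s t => (t : ℂ) ^ (-δ - 1) *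
    ((γ i * ((c : ℂ) + (s : ℂ) * (t : ℂ)) ^ (γ i - 1) * (t : ℂ)) *
      ∏ j ∈ Finset.univ.erase i, ((x (0, j) : ℂ) + (x (1, j) : ℂ) * (t : ℂ)) ^ (γ j)) with hF'
  have hrw : ∀ s : ℝ, Phi γ δ a b (Function.update x (1, i) s) = ∫ t in a..b, F s t := by
    intro s
    unfold Phi
    apply intervalIntegral.integral_congr
    intro t _
    show (t : ℂ) ^ (-δ - 1) * ∏ k, ((Function.update x (1, i) s (0, k) : ℂ)
        + (Function.update x (1, i) s (1, k) : ℂ) * (t : ℂ)) ^ (γ k) = F s t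
    rw [← Finset.mul_prod_erase Finset.univ _ (Finset.mem_univ i)]
    rw [hF]
    congr 2
    · rw [Function.update_of_ne (by simp [Prod.ext_iff, h01]), Function.update_self]
    · apply Finset.prod_congr rfl
      intro j hj
      have hji : j ≠ i := Finset.ne_of_mem_erase hj
      rw [Function.update_of_ne (by simp [Prod.ext_iff, h01]),
        Function.update_of_ne (by simp [Prod.ext_iff, hji])]
  have huIoc : Set.uIoc a b = Ioc a b := uIoc_of_le hab.le
  have huIcc : uIcc a b = Icc a b := uIcc_of_le hab.le
  set K : Set (ℝ × ℝ) := Icc (x₀ / 2) (x₀ + x₀ / 2) ×ˢ Icc a b with hK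
  have hKc : IsCompact K := isCompact_Icc.prod isCompact_Icc
  have hKne : K.Nonempty := ⟨(x₀, a), by
    constructor
    · constructor <;> [linarith; linarith]
    · exact ⟨le_refl a, hab.le⟩⟩
  have hφ : ContinuousOn (fun p : ℝ × ℝ => ‖F' p.1 p.2‖) K := by
    apply ContinuousOn.norm
    rw [hF']
    refine (ContinuousOn.mul ?_ (((continuousOn_const.mul (ContinuousOn.cpow ?_
      continuousOn_const ?_)).mul ?_).mul ?_))
    · apply ContinuousOn.cpow _ continuousOn_const
      · intro p hp
        exact Complex.ofReal_mem_slitPlane.2 (lt_of_lt_of_le ha hp.2.1)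
      · fun_prop
    · fun_prop
    · intro p hp
      apply slit_aff
      have h1 : x₀ / 2 ≤ p.1 := hp.1.1
      have h2 : a ≤ p.2 := hp.2.1
      nlinarith
    · fun_prop
    · exact (contOn_prodfn x hx γ _ (fun t ht => lt_of_lt_of_le ha ht.1)).comp
        continuous_snd.continuousOn (fun p hp => hp.2)
  obtain ⟨pm, hpmK, hpm⟩ := hKc.exists_isMaxOn hKne hφ
  have hF_meas : ∀ᶠ s in nhds x₀, AEStronglyMeasurable (F s) (volume.restrict (Set.uIoc a b)) := by
    filter_upwards [Metric.ball_mem_nhds x₀ (half_pos x₀pos)] with s hs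
    have hspos : 0 < s := by
      rw [Metric.mem_ball, Real.dist_eq, abs_sub_lt_iff] at hs
      linarith [hs.1, hs.2]
    apply ContinuousOn.aestronglyMeasurable _ measurableSet_uIoc
    rw [hF, huIoc]
    apply ContinuousOn.mul
    · exact contOn_cpow_id _ (fun t ht => lt_trans ha ht.1)
    · refine ContinuousOn.mul (contOn_cpow_aff c s _ (fun t ht => ?_))
        (contOn_prodfn x hx γ _ (fun t ht => lt_trans ha ht.1))
      have htpos : 0 < t := lt_trans ha ht.1
      positivity
  have hF_int : IntervalIntegrable (F x₀) volume a b := by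
    apply ContinuousOn.intervalIntegrable
    rw [hF, huIcc]
    apply ContinuousOn.mul
    · exact contOn_cpow_id _ (fun t ht => lt_of_lt_of_le ha ht.1)
    · refine ContinuousOn.mul (contOn_cpow_aff c x₀ _ (fun t ht => ?_))
        (contOn_prodfn x hx γ _ (fun t ht => lt_of_lt_of_le ha ht.1))
      have htpos : 0 < t := lt_of_lt_of_le ha ht.1
      positivity
  have hF'_meas : AEStronglyMeasurable (F' x₀) (volume.restrict (Set.uIoc a b)) := by
    apply ContinuousOn.aestronglyMeasurable _ measurableSet_uIoc
    rw [hF', huIoc]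
    apply ContinuousOn.mul
    · exact contOn_cpow_id _ (fun t ht => lt_trans ha ht.1)
    · refine ContinuousOn.mul ((continuousOn_const.mul (contOn_cpow_aff c x₀ _
        (fun t ht => ?_))).mul (by fun_prop))
        (contOn_prodfn x hx γ _ (fun t ht => lt_trans ha ht.1))
      have htpos : 0 < t := lt_trans ha ht.1
      positivity
  have h_bound : ∀ᵐ t ∂(volume : Measure ℝ), t ∈ Set.uIoc a b →
      ∀ s ∈ Metric.ball x₀ (x₀ / 2), ‖F' s t‖ ≤ ‖F' pm.1 pm.2‖ := by
    apply ae_of_all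
    intro t ht s hs
    rw [huIoc] at ht
    have hsK : (s, t) ∈ K := by
      rw [Metric.mem_ball, Real.dist_eq, abs_sub_lt_iff] at hs
      exact ⟨⟨by linarith [hs.2], by linarith [hs.1]⟩, ⟨ht.1.le, ht.2⟩⟩
    exact isMaxOn_iff.mp hpm (s, t) hsK
  have h_diff : ∀ᵐ t ∂(volume : Measure ℝ), t ∈ Set.uIoc a b →
      ∀ s ∈ Metric.ball x₀ (x₀ / 2), HasDerivAt (fun s => F s t) (F' s t) s := by
    apply ae_of_all
    intro t ht s hs
    rw [huIoc] at ht
    have htpos : 0 < t := lt_trans ha ht.1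
    have hspos : 0 < s := by
      rw [Metric.mem_ball, Real.dist_eq, abs_sub_lt_iff] at hs
      linarith [hs.1, hs.2]
    have hb : 0 < c + s * t := by positivity
    exact (((hasDerivAt_cpow_aff s (γ i) hb).mul_const _).const_mul _)
  have key := (intervalIntegral.hasDerivAt_integral_of_dominated_loc_of_deriv_le
      (Metric.ball_mem_nhds _ (half_pos x₀pos)) hF_meas hF_int hF'_meas h_bound intervalIntegrable_const h_diff).2
  unfold pd
  have hfun : (fun s : ℝ => Phi γ δ a b (Function.update x (1, i) s))
      = fun s => ∫ t in a..b, F s t := funext hrw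
  rw [hfun]
  exact key.deriv
lemma hasDerivAt_cpow_id (t : ℝ) (w : ℂ) (h : 0 < t) :
    HasDerivAt (fun t : ℝ => (t : ℂ) ^ w) (w * (t : ℂ) ^ (w - 1)) t := by
  have h1 : HasDerivAt (fun z : ℂ => z ^ w) (w * (t : ℂ) ^ (w - 1)) (t : ℂ) := by
    simpa using (hasDerivAt_id (t : ℂ)).cpow_const (Complex.ofReal_mem_slitPlane.2 h)
  exact h1.comp_ofReal
lemma hasDerivAt_cpow_aff' {c d : ℝ} (t : ℝ) (w : ℂ) (h : 0 < c + d * t) :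
    HasDerivAt (fun t : ℝ => ((c : ℂ) + (d : ℂ) * (t : ℂ)) ^ w)
      (w * ((c : ℂ) + (d : ℂ) * (t : ℂ)) ^ (w - 1) * d) t := by
  have h1 : HasDerivAt (fun z : ℂ => ((c : ℂ) + (d : ℂ) * z) ^ w)
      (w * ((c : ℂ) + (d : ℂ) * (t : ℂ)) ^ (w - 1) * d) (t : ℂ) := by
    have hb : HasDerivAt (fun z : ℂ => (c : ℂ) + (d : ℂ) * z) (d : ℂ) (t : ℂ) := by
      simpa using ((hasDerivAt_id (t : ℂ)).const_mul (d : ℂ)).const_add (c : ℂ)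
    simpa using hb.cpow_const (slit_aff h)
  exact h1.comp_ofReal

lemma gfun_ftc {n : ℕ} (α : Fin n → ℂ) (δ : ℂ) (a b : ℝ) (ha : 0 < a) (hab : a < b)
    (x : (Fin 2 × Fin n) → ℝ) (hx : ∀ p, 0 < x p) :
    (∫ t in a..b, ((-δ) * (t : ℂ) ^ (-δ - 1)
        * ∏ j, ((x (0, j) : ℂ) + (x (1, j) : ℂ) * (t : ℂ)) ^ (α j)
      + (t : ℂ) ^ (-δ) * ∑ i, (∏ j ∈ Finset.univ.erase i,
            ((x (0, j) : ℂ) + (x (1, j) : ℂ) * (t : ℂ)) ^ (α j))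
          * (α i * ((x (0, i) : ℂ) + (x (1, i) : ℂ) * (t : ℂ)) ^ (α i - 1) * (x (1, i) : ℂ))))
      = gfun α δ b x - gfun α δ a x := by
  apply intervalIntegral.integral_eq_sub_of_hasDerivAt
  · intro t ht
    rw [uIcc_of_le hab.le] at ht
    have htpos : 0 < t := lt_of_lt_of_le ha ht.1
    have h1 : HasDerivAt (fun t : ℝ => (t : ℂ) ^ (-δ)) ((-δ) * (t : ℂ) ^ (-δ - 1)) t :=
      hasDerivAt_cpow_id t (-δ) htpos
    have h2 : HasDerivAt (fun t : ℝ => ∏ j, ((x (0, j) : ℂ) + (x (1, j) : ℂ) * (t : ℂ)) ^ (α j))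
        (∑ i, (∏ j ∈ Finset.univ.erase i, ((x (0, j) : ℂ) + (x (1, j) : ℂ) * (t : ℂ)) ^ (α j))
          • (α i * ((x (0, i) : ℂ) + (x (1, i) : ℂ) * (t : ℂ)) ^ (α i - 1) * (x (1, i) : ℂ))) t := by
      apply HasDerivAt.fun_finsetProd
      intro j _
      exact hasDerivAt_cpow_aff' t (α j) (add_pos (hx (0, j)) (mul_pos (hx (1, j)) htpos))
    have h3 := h1.mul h2
    simp only [smul_eq_mul] at h2 h3 ⊢
    exact h3
  · apply ContinuousOn.intervalIntegrable
    rw [uIcc_of_le hab.le]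
    have hpos : ∀ t ∈ Icc a b, 0 < t := fun t ht => lt_of_lt_of_le ha ht.1
    apply ContinuousOn.add
    · exact (continuousOn_const.mul (contOn_cpow_id _ hpos)).mul
        (contOn_prodfn x hx α _ hpos)
    · apply ContinuousOn.mul (contOn_cpow_id _ hpos)
      apply continuousOn_finset_sum
      intro i _
      refine ContinuousOn.mul (contOn_prodfn x hx α _ hpos) ?_
      refine (continuousOn_const.mul (contOn_cpow_aff _ _ _ (fun t ht =>
        add_pos (hx (0, i)) (mul_pos (hx (1, i)) (hpos t ht))))).mul continuousOn_const
set_option maxHeartbeats 1000000 in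
lemma pointwise {n : ℕ} (α : Fin n → ℂ) (δ : ℂ) (k : Fin n) (x : (Fin 2 × Fin n) → ℝ)
    (hx : ∀ p, 0 < x p) (t : ℝ) (ht : 0 < t) :
    ∑ i ∈ Finset.univ \ {k}, ((x (0, i) * x (1, k) - x (0, k) * x (1, i) : ℝ) : ℂ) *
        ((t : ℂ) ^ (-δ - 1) *
          ((Function.update α k (α k - 1) i
              * ((x (0, i) : ℂ) + (x (1, i) : ℂ) * (t : ℂ)) ^ (Function.update α k (α k - 1) i - 1)
              * (t : ℂ))
            * ∏ j ∈ Finset.univ.erase i,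
                ((x (0, j) : ℂ) + (x (1, j) : ℂ) * (t : ℂ)) ^ (Function.update α k (α k - 1) j)))
      + (∑ i, α i) * (x (0, k) : ℂ) * ((t : ℂ) ^ (-δ - 1)
          * ∏ j, ((x (0, j) : ℂ) + (x (1, j) : ℂ) * (t : ℂ)) ^ (Function.update α k (α k - 1) j))
      = ((∑ i, α i) - δ) * ((t : ℂ) ^ (-δ - 1)
            * ∏ j, ((x (0, j) : ℂ) + (x (1, j) : ℂ) * (t : ℂ)) ^ (α j))
        - ((-δ) * (t : ℂ) ^ (-δ - 1) * ∏ j, ((x (0, j) : ℂ) + (x (1, j) : ℂ) * (t : ℂ)) ^ (α j)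
          + (t : ℂ) ^ (-δ) * ∑ i, (∏ j ∈ Finset.univ.erase i,
                ((x (0, j) : ℂ) + (x (1, j) : ℂ) * (t : ℂ)) ^ (α j))
              * (α i * ((x (0, i) : ℂ) + (x (1, i) : ℂ) * (t : ℂ)) ^ (α i - 1) * (x (1, i) : ℂ))) := by
  set β := Function.update α k (α k - 1) with hβ
  set z : Fin n → ℂ := fun j => ((x (0, j) : ℂ) + (x (1, j) : ℂ) * (t : ℂ)) with hzdef
  have hzr : ∀ j, z j = ((x (0, j) + x (1, j) * t : ℝ) : ℂ) := fun j => by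
    rw [hzdef]; push_cast; ring
  have hzpos : ∀ j, 0 < x (0, j) + x (1, j) * t := fun j =>
    add_pos (hx (0, j)) (mul_pos (hx (1, j)) ht)
  have hz : ∀ j, z j ≠ 0 := fun j => by
    rw [hzr j]; exact_mod_cast (hzpos j).ne'
  set p : Fin n → ℂ := fun j => z j ^ (α j) with hpdef
  have hp : ∀ j, p j ≠ 0 := fun j => by
    rw [hpdef]
    simp only [ne_eq, Complex.cpow_eq_zero_iff, not_and_or, not_ne_iff]
    exact Or.inl (hz j)
  set P := ∏ j, p j with hP
  have hPne : P ≠ 0 := Finset.prod_ne_zero_iff.2 (fun j _ => hp j)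
  set u := (t : ℂ) ^ (-δ - 1) with hu
  have htne : (t : ℂ) ≠ 0 := by exact_mod_cast ht.ne'
  have hune : u ≠ 0 := by
    rw [hu]
    simp only [ne_eq, Complex.cpow_eq_zero_iff, not_and_or, not_ne_iff]
    exact Or.inl htne
  have htp : (t : ℂ) ^ (-δ) = (t : ℂ) * u := by
    rw [hu, show -δ = (-δ - 1) + 1 by ring, Complex.cpow_add _ _ htne, Complex.cpow_one]
    ring
  have hβk : β k = α k - 1 := Function.update_self _ _ _
  have hβi : ∀ i, i ≠ k → β i = α i := fun i hik => Function.update_of_ne hik _ _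
  have hcpow_sub : ∀ j, z j ^ (α j - 1) = p j / z j := fun j => by
    rw [hpdef, Complex.cpow_sub _ _ (hz j), Complex.cpow_one]
  -- the β-product
  have hprodβ : ∏ j, z j ^ (β j) = P / z k := by
    rw [← Finset.mul_prod_erase Finset.univ _ (Finset.mem_univ k), hβk, hcpow_sub k]
    rw [hP, ← Finset.mul_prod_erase Finset.univ p (Finset.mem_univ k)]
    have hcongr : ∏ j ∈ Finset.univ.erase k, z j ^ (β j)
        = ∏ j ∈ Finset.univ.erase k, p j :=
      Finset.prod_congr rfl (fun j hj => by rw [hβi j (Finset.ne_of_mem_erase hj)])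
    rw [hcongr]
    ring
  -- erase-products
  have heraseβ : ∀ i, i ≠ k → (∏ j ∈ Finset.univ.erase i, z j ^ (β j)) = (P / z k) / p i := by
    intro i hik
    have h5 : (∏ j ∈ Finset.univ.erase i, z j ^ (β j)) * (z i ^ (β i))
        = P / z k := by rw [Finset.prod_erase_mul _ _ (Finset.mem_univ i)]; exact hprodβ
    rw [hβi i hik] at h5
    exact (eq_div_iff (hp i)).mpr h5
  have hterm : ∀ i ∈ Finset.univ \ {k},
      ((x (0, i) * x (1, k) - x (0, k) * x (1, i) : ℝ) : ℂ) *
        (u * ((β i * z i ^ (β i - 1) * (t : ℂ)) * ∏ j ∈ Finset.univ.erase i, z j ^ (β j)))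
      = α i * (((x (1, k) : ℂ) / z k) * P) * ((t : ℂ) * u)
        - α i * (((x (1, i) : ℂ) / z i) * P) * ((t : ℂ) * u) := by
    intro i hi
    have hik : i ≠ k := by
      simpa using (Finset.mem_sdiff.mp hi).2
    have hzi : z i = (x (0, i) : ℂ) + (x (1, i) : ℂ) * (t : ℂ) := rfl
    have hzk : z k = (x (0, k) : ℂ) + (x (1, k) : ℂ) * (t : ℂ) := rfl
    rw [hβi i hik, hcpow_sub i, heraseβ i hik]
    field_simp [hz i, hz k, hp i]
    push_cast
    linear_combination (α i * (t : ℂ) * u * P * p i * z i * z k) *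
      (((x (1, k) : ℂ)) * hzi - ((x (1, i) : ℂ)) * hzk)
  have hzfold : ∀ j : Fin n, ((x (0, j) : ℂ) + (x (1, j) : ℂ) * (t : ℂ)) = z j := fun _ => rfl
  have hGterm : ∀ i ∈ (Finset.univ : Finset (Fin n)),
      (∏ j ∈ Finset.univ.erase i, p j) * (α i * z i ^ (α i - 1) * (x (1, i) : ℂ))
        = α i * (((x (1, i) : ℂ) / z i) * P) := by
    intro i _
    have h5 : (∏ j ∈ Finset.univ.erase i, p j) * p i = P := by
      rw [Finset.prod_erase_mul _ _ (Finset.mem_univ i), hP]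
    have heraseα : ∏ j ∈ Finset.univ.erase i, p j = P / p i :=
      (eq_div_iff (hp i)).mpr h5
    rw [heraseα, hcpow_sub i]
    field_simp [hz i, hp i]
  simp only [hzfold]
  rw [Finset.sum_congr rfl hterm, hprodβ, Finset.sum_congr rfl hGterm, htp]
  rw [Finset.sum_sub_distrib]
  rw [← Finset.sum_mul, ← Finset.sum_mul, ← Finset.sum_mul]
  rw [Finset.sum_sdiff_eq_sub (Finset.subset_univ _), Finset.sum_sdiff_eq_sub (Finset.subset_univ _)]
  rw [Finset.sum_singleton, Finset.sum_singleton]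
  have hzk : z k = (x (0, k) : ℂ) + (x (1, k) : ℂ) * (t : ℂ) := rfl
  generalize (∑ i, α i * ((x (1, i) : ℂ) / z i * P)) = Q
  field_simp [hz k]
  linear_combination ((∑ i, α i) * u * P) * hzk
set_option maxHeartbeats 1000000 in
/-- up-step contiguity in `a_{1k}`, where `Ψ = Φ(α − e_k, δ; ·)`:
`Σ_{i≠k} (x_{1i}x_{2k} − x_{1k}x_{2i})·∂Ψ/∂x_{2i} + (Σᵢ α_i)·x_{1k}·Ψ
  = (Σᵢ α_i − δ)·Φ(α,δ;x) − [g(t,x)]_{t=a}^{t=b}`. -/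
theorem stmt14 {n : ℕ} (hn : 1 ≤ n) (α : Fin n → ℂ) (δ : ℂ) (a b : ℝ)
    (ha : 0 < a) (hab : a < b) (hδ : 0 < (-δ - 1).re) (hα : ∀ k, 0 < (α k).re)
    (k : Fin n) (x : (Fin 2 × Fin n) → ℝ) (hx : ∀ p, 0 < x p) :
    ∑ i ∈ Finset.univ \ {k},
        ((x (0, i) * x (1, k) - x (0, k) * x (1, i) : ℝ) : ℂ)
          * pd (1, i) (Phi (Function.update α k (α k - 1)) δ a b) x
      + (∑ i, α i) * (x (0, k) : ℂ)
          * Phi (Function.update α k (α k - 1)) δ a b x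
      = ((∑ i, α i) - δ) * Phi α δ a b x - (gfun α δ b x - gfun α δ a x) := by
  have huIcc : uIcc a b = Icc a b := uIcc_of_le hab.le
  have hpos : ∀ t ∈ Icc a b, 0 < t := fun t ht => lt_of_lt_of_le ha ht.1
  set β := Function.update α k (α k - 1) with hβ
  -- continuity helpers
  have hDcont : ∀ i : Fin n, ContinuousOn (fun t : ℝ => (t : ℂ) ^ (-δ - 1) *
      ((β i * ((x (0, i) : ℂ) + (x (1, i) : ℂ) * (t : ℂ)) ^ (β i - 1) * (t : ℂ))
        * ∏ j ∈ Finset.univ.erase i,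
            ((x (0, j) : ℂ) + (x (1, j) : ℂ) * (t : ℂ)) ^ (β j))) (Icc a b) := by
    intro i
    refine (contOn_cpow_id _ hpos).mul (ContinuousOn.mul
      (((continuousOn_const.mul (contOn_cpow_aff _ _ _ (fun t ht =>
        add_pos (hx (0, i)) (mul_pos (hx (1, i)) (hpos t ht))))).mul (by fun_prop)))
      (contOn_prodfn x hx β _ hpos))
  have hcDint : ∀ i : Fin n, IntervalIntegrable (fun t : ℝ =>
      ((x (0, i) * x (1, k) - x (0, k) * x (1, i) : ℝ) : ℂ) * ((t : ℂ) ^ (-δ - 1) *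
      ((β i * ((x (0, i) : ℂ) + (x (1, i) : ℂ) * (t : ℂ)) ^ (β i - 1) * (t : ℂ))
        * ∏ j ∈ Finset.univ.erase i,
            ((x (0, j) : ℂ) + (x (1, j) : ℂ) * (t : ℂ)) ^ (β j)))) MeasureTheory.volume a b := by
    intro i
    apply ContinuousOn.intervalIntegrable
    rw [huIcc]
    exact continuousOn_const.mul (hDcont i)
  have hsum_int : IntervalIntegrable (fun t : ℝ => ∑ i ∈ Finset.univ \ {k},
      ((x (0, i) * x (1, k) - x (0, k) * x (1, i) : ℝ) : ℂ) * ((t : ℂ) ^ (-δ - 1) *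
      ((β i * ((x (0, i) : ℂ) + (x (1, i) : ℂ) * (t : ℂ)) ^ (β i - 1) * (t : ℂ))
        * ∏ j ∈ Finset.univ.erase i,
            ((x (0, j) : ℂ) + (x (1, j) : ℂ) * (t : ℂ)) ^ (β j)))) MeasureTheory.volume a b := by
    apply ContinuousOn.intervalIntegrable
    rw [huIcc]
    apply continuousOn_finset_sum
    intro i _
    exact continuousOn_const.mul (hDcont i)
  have hψ_int : IntervalIntegrable (fun t : ℝ => (∑ i, α i) * (x (0, k) : ℂ) *
      ((t : ℂ) ^ (-δ - 1)
        * ∏ j, ((x (0, j) : ℂ) + (x (1, j) : ℂ) * (t : ℂ)) ^ (β j))) MeasureTheory.volume a b := by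
    apply ContinuousOn.intervalIntegrable
    rw [huIcc]
    exact continuousOn_const.mul ((contOn_cpow_id _ hpos).mul (contOn_prodfn x hx β _ hpos))
  have hF_int : IntervalIntegrable (fun t : ℝ => ((∑ i, α i) - δ) *
      ((t : ℂ) ^ (-δ - 1)
        * ∏ j, ((x (0, j) : ℂ) + (x (1, j) : ℂ) * (t : ℂ)) ^ (α j))) MeasureTheory.volume a b := by
    apply ContinuousOn.intervalIntegrable
    rw [huIcc]
    exact continuousOn_const.mul ((contOn_cpow_id _ hpos).mul (contOn_prodfn x hx α _ hpos))
  have hG_int : IntervalIntegrable (fun t : ℝ => ((-δ) * (t : ℂ) ^ (-δ - 1)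
        * ∏ j, ((x (0, j) : ℂ) + (x (1, j) : ℂ) * (t : ℂ)) ^ (α j)
      + (t : ℂ) ^ (-δ) * ∑ i, (∏ j ∈ Finset.univ.erase i,
            ((x (0, j) : ℂ) + (x (1, j) : ℂ) * (t : ℂ)) ^ (α j))
          * (α i * ((x (0, i) : ℂ) + (x (1, i) : ℂ) * (t : ℂ)) ^ (α i - 1) * (x (1, i) : ℂ))))
      MeasureTheory.volume a b := by
    apply ContinuousOn.intervalIntegrable
    rw [huIcc]
    apply ContinuousOn.add
    · exact (continuousOn_const.mul (contOn_cpow_id _ hpos)).mul (contOn_prodfn x hx α _ hpos)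
    · apply ContinuousOn.mul (contOn_cpow_id _ hpos)
      apply continuousOn_finset_sum
      intro i _
      refine ContinuousOn.mul (contOn_prodfn x hx α _ hpos) ?_
      exact (continuousOn_const.mul (contOn_cpow_aff _ _ _ (fun t ht =>
        add_pos (hx (0, i)) (mul_pos (hx (1, i)) (hpos t ht))))).mul continuousOn_const
  -- rewrite pd's as integrals
  have h1 : ∀ i ∈ Finset.univ \ {k},
      ((x (0, i) * x (1, k) - x (0, k) * x (1, i) : ℝ) : ℂ) * pd (1, i) (Phi β δ a b) x
      = ∫ t in a..b, ((x (0, i) * x (1, k) - x (0, k) * x (1, i) : ℝ) : ℂ) *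
          ((t : ℂ) ^ (-δ - 1) *
            ((β i * ((x (0, i) : ℂ) + (x (1, i) : ℂ) * (t : ℂ)) ^ (β i - 1) * (t : ℂ))
              * ∏ j ∈ Finset.univ.erase i,
                  ((x (0, j) : ℂ) + (x (1, j) : ℂ) * (t : ℂ)) ^ (β j))) := by
    intro i _
    rw [pd_phi β δ a b ha hab i x hx, ← intervalIntegral.integral_const_mul]
  rw [Finset.sum_congr rfl h1]
  rw [← intervalIntegral.integral_finset_sum (fun i _ => hcDint i)]
  have hPhiβ : Phi β δ a b x = ∫ t in a..b, (t : ℂ) ^ (-δ - 1)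
      * ∏ j, ((x (0, j) : ℂ) + (x (1, j) : ℂ) * (t : ℂ)) ^ (β j) := rfl
  have hPhiα : Phi α δ a b x = ∫ t in a..b, (t : ℂ) ^ (-δ - 1)
      * ∏ j, ((x (0, j) : ℂ) + (x (1, j) : ℂ) * (t : ℂ)) ^ (α j) := rfl
  rw [hPhiβ, hPhiα, ← intervalIntegral.integral_const_mul, ← intervalIntegral.integral_const_mul]
  rw [← intervalIntegral.integral_add hsum_int hψ_int]
  rw [← gfun_ftc α δ a b ha hab x hx]
  rw [← intervalIntegral.integral_sub hF_int hG_int]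
  apply intervalIntegral.integral_congr
  intro t ht
  rw [huIcc] at ht
  exact pointwise α δ k x hx t (hpos t ht)
end

section
/- (Up-step contiguity in a_{2k}.) Fix k with 1 ≤ k ≤ n and set Ψ(x) = Φ(α − e_k, δ − 1; x) = ∫_a^b t^{−δ} (x_{1k}+x_{2k}t)^{α_k−1} ∏_{j≠k} (x_{1j}+x_{2j}t)^{α_j} dt. Then at every point x with all coordinates positive, Σ_{i≠k} x_{1k}x_{2i}·∂Ψ/∂x_{1i}(x) + x_{2k}·Σ_{i≠k} x_{2i}·∂Ψ/∂x_{2i}(x) + α_k·x_{2k}·Ψ(x) = δ·Φ(α,δ;x) + [g(t,x)]_{t=a}^{t=b}. -/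
open Complex Function

namespace Stmt15Aux

open MeasureTheory Metric Set Finset intervalIntegral

lemma re_pos_aux (u v t : ℝ) (h : 0 < u + v * t) :
    ((u : ℂ) + (v : ℂ) * (t : ℂ)) ∈ Complex.slitPlane := by
  left
  have : ((u : ℂ) + (v : ℂ) * (t : ℂ)) = ((u + v * t : ℝ) : ℂ) := by push_cast; ring
  rw [this]
  simpa using h

lemma hasDerivAt_cpow_ofReal (c : ℂ) {t : ℝ} (ht : 0 < t) :
    HasDerivAt (fun r : ℝ => (r : ℂ) ^ c) (c * (t : ℂ) ^ (c - 1)) t := by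
  have h := (hasDerivAt_id ((t : ℝ) : ℂ)).cpow_const (c := c) (Or.inl (by simpa using ht))
  simpa using h.comp_ofReal

lemma hasDerivAt_affine (u w β : ℂ) (s : ℝ) (h : (u + w * (s : ℂ)) ∈ Complex.slitPlane) :
    HasDerivAt (fun r : ℝ => (u + w * (r : ℂ)) ^ β) (β * (u + w * (s : ℂ)) ^ (β - 1) * w) s := by
  have h2 : HasDerivAt (fun z : ℂ => u + w * z) w ((s : ℝ) : ℂ) := by
    simpa using ((hasDerivAt_id ((s : ℝ) : ℂ)).const_mul w).const_add u
  exact (h2.cpow_const h).comp_ofReal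

lemma hasDerivAt_affine' (w β : ℂ) (s : ℝ) (h : ((s : ℂ) + w) ∈ Complex.slitPlane) :
    HasDerivAt (fun r : ℝ => ((r : ℂ) + w) ^ β) (β * ((s : ℂ) + w) ^ (β - 1)) s := by
  have h2 : HasDerivAt (fun z : ℂ => z + w) 1 ((s : ℝ) : ℂ) := (hasDerivAt_id _).add_const w
  simpa using (h2.cpow_const h).comp_ofReal

lemma contOn_cpow_ofReal (c : ℂ) (T : Set ℝ) (hT : ∀ t ∈ T, 0 < t) :
    ContinuousOn (fun r : ℝ => (r : ℂ) ^ c) T := by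
  intro t ht
  exact ((Complex.continuous_ofReal.continuousAt).cpow continuousAt_const
    (Or.inl (by simpa using hT t ht))).continuousWithinAt

lemma contOn_affine (u v : ℝ) (γ : ℂ) (T : Set ℝ) (h : ∀ t ∈ T, 0 < u + v * t) :
    ContinuousOn (fun r : ℝ => ((u : ℂ) + (v : ℂ) * (r : ℂ)) ^ γ) T := by
  intro t ht
  have hb : ContinuousAt (fun r : ℝ => (u : ℂ) + (v : ℂ) * (r : ℂ)) t := by fun_prop
  exact (hb.cpow continuousAt_const (re_pos_aux u v t (h t ht))).continuousWithinAt

lemma contOn_prod {n : ℕ} (S : Finset (Fin n)) (u v : Fin n → ℝ) (γ : Fin n → ℂ) (T : Set ℝ)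
    (h : ∀ j t, t ∈ T → 0 < u j + v j * t) :
    ContinuousOn (fun r : ℝ => ∏ j ∈ S, ((u j : ℂ) + (v j : ℂ) * (r : ℂ)) ^ γ j) T := by
  apply continuousOn_finset_prod
  intro j _
  exact contOn_affine (u j) (v j) (γ j) T (fun t ht => h j t ht)

/-- d/dx_{1i} of Phi. -/
lemma pd0_Phi {n : ℕ} (β : Fin n → ℂ) (c : ℂ) {a b : ℝ} (ha : 0 < a) (hab : a < b)
    (x : (Fin 2 × Fin n) → ℝ) (hx : ∀ p, 0 < x p) (i : Fin n) :
    pd (0, i) (Phi β c a b) x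
      = ∫ t in a..b, β i * ((t : ℂ) ^ (-c - 1) *
          (((x (0, i) : ℂ) + (x (1, i) : ℂ) * (t : ℂ)) ^ (β i - 1) *
            ∏ j ∈ Finset.univ.erase i, ((x (0, j) : ℂ) + (x (1, j) : ℂ) * (t : ℂ)) ^ (β j))) := by
  classical
  have hs₀pos : 0 < x (0, i) := hx _
  have hεpos : 0 < x (0, i) / 2 := by positivity
  have hwpos : 0 < x (1, i) := hx _
  -- positivity of t on relevant sets
  have hIoc : Set.uIoc a b = Set.Ioc a b := Set.uIoc_of_le hab.le
  have hIcc : Set.uIcc a b = Set.Icc a b := Set.uIcc_of_le hab.le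
  have htpos_Ioc : ∀ t ∈ Set.uIoc a b, 0 < t := by
    intro t ht; rw [hIoc] at ht; exact ha.trans ht.1
  have htpos_Icc : ∀ t ∈ Set.uIcc a b, 0 < t := by
    intro t ht; rw [hIcc] at ht; exact lt_of_lt_of_le ha ht.1
  -- rewriting Phi on updates
  have key : ∀ s : ℝ, Phi β c a b (Function.update x (0, i) s)
      = ∫ t in a..b, (t : ℂ) ^ (-c - 1) * (((s : ℂ) + (x (1, i) : ℂ) * (t : ℂ)) ^ (β i) *
          ∏ j ∈ Finset.univ.erase i, ((x (0, j) : ℂ) + (x (1, j) : ℂ) * (t : ℂ)) ^ (β j)) := by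
    intro s
    rw [Phi]
    refine intervalIntegral.integral_congr fun t _ => ?_
    rw [← Finset.mul_prod_erase Finset.univ _ (Finset.mem_univ i)]
    have e1 : Function.update x (0, i) s (0, i) = s := Function.update_self _ _ _
    have e2 : Function.update x (0, i) s (1, i) = x (1, i) :=
      Function.update_of_ne (by simp) _ _
    rw [e1, e2]
    congr 2
    exact Finset.prod_congr rfl fun j hj => by
      have hji : j ≠ i := Finset.ne_of_mem_erase hj
      rw [Function.update_of_ne (by simp [hji]), Function.update_of_ne (by simp [hji])]
  have hball : ∀ s ∈ Metric.closedBall (x (0, i)) (x (0, i) / 2), 0 < s := by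
    intro s hs
    have h1 : |s - x (0, i)| ≤ x (0, i) / 2 := by
      rw [← Real.dist_eq]; exact Metric.mem_closedBall.mp hs
    linarith [(abs_le.mp h1).1]
  -- bound for the derivative on a compact set
  obtain ⟨C, hC⟩ : ∃ C, ∀ q ∈ (Metric.closedBall (x (0, i)) (x (0, i) / 2)) ×ˢ (Set.uIcc a b),
      ‖β i * ((q.2 : ℂ) ^ (-c - 1) * (((q.1 : ℂ) + (x (1, i) : ℂ) * (q.2 : ℂ)) ^ (β i - 1) *
        ∏ j ∈ Finset.univ.erase i, ((x (0, j) : ℂ) + (x (1, j) : ℂ) * (q.2 : ℂ)) ^ (β j)))‖ ≤ C := by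
    apply ((isCompact_closedBall _ _).prod isCompact_uIcc).exists_bound_of_continuousOn
    intro q hq
    obtain ⟨hq1, hq2⟩ := hq
    have hq1pos : 0 < q.1 := hball _ hq1
    have hq2pos : 0 < q.2 := htpos_Icc _ hq2
    apply ContinuousAt.continuousWithinAt
    refine continuousAt_const.mul (ContinuousAt.mul ?_ (ContinuousAt.mul ?_ ?_))
    · exact ContinuousAt.cpow (by fun_prop) continuousAt_const (Or.inl (by simpa using hq2pos))
    · exact ContinuousAt.cpow (by fun_prop) continuousAt_const
        (re_pos_aux q.1 (x (1, i)) q.2 (by positivity))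
    · exact tendsto_finset_prod _ fun j _ =>
        ContinuousAt.cpow (by fun_prop) continuousAt_const
          (re_pos_aux (x (0, j)) (x (1, j)) q.2 (by have := hx (0, j); have := hx (1, j); positivity))
  have main := (intervalIntegral.hasDerivAt_integral_of_dominated_loc_of_deriv_le
      (μ := MeasureTheory.volume) (𝕜 := ℝ)
      (F := fun s t => (t : ℂ) ^ (-c - 1) * (((s : ℂ) + (x (1, i) : ℂ) * (t : ℂ)) ^ (β i) *
          ∏ j ∈ Finset.univ.erase i, ((x (0, j) : ℂ) + (x (1, j) : ℂ) * (t : ℂ)) ^ (β j)))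
      (F' := fun s t => β i * ((t : ℂ) ^ (-c - 1) * (((s : ℂ) + (x (1, i) : ℂ) * (t : ℂ)) ^ (β i - 1) *
          ∏ j ∈ Finset.univ.erase i, ((x (0, j) : ℂ) + (x (1, j) : ℂ) * (t : ℂ)) ^ (β j))))
      (x₀ := x (0, i)) (s := Metric.ball (x (0, i)) (x (0, i) / 2)) (bound := fun _ => C) (a := a) (b := b)
      (Metric.ball_mem_nhds _ hεpos) ?_ ?_ ?_ ?_ ?_ ?_).2
  · unfold pd
    have heq : (fun s : ℝ => Phi β c a b (Function.update x (0, i) s))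
        = fun s : ℝ => ∫ t in a..b, (t : ℂ) ^ (-c - 1) *
            (((s : ℂ) + (x (1, i) : ℂ) * (t : ℂ)) ^ (β i) *
              ∏ j ∈ Finset.univ.erase i, ((x (0, j) : ℂ) + (x (1, j) : ℂ) * (t : ℂ)) ^ (β j)) :=
      funext key
    rw [heq]
    exact main.deriv
  · -- measurability of F s for s near x₀
    filter_upwards [Metric.ball_mem_nhds _ hεpos] with s hs
    have hspos : 0 < s := hball s (Metric.ball_subset_closedBall hs)
    refine ContinuousOn.aestronglyMeasurable ?_ measurableSet_uIoc
    exact (contOn_cpow_ofReal _ _ htpos_Ioc).mul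
      ((contOn_affine s (x (1, i)) (β i) _ (fun t ht => by have := htpos_Ioc t ht; positivity)).mul
        (contOn_prod _ _ _ _ _ (fun j t ht => by
          have := htpos_Ioc t ht; have := hx (0, j); have := hx (1, j); positivity)))
  · -- integrability of F x₀
    apply ContinuousOn.intervalIntegrable
    exact (contOn_cpow_ofReal _ _ htpos_Icc).mul
      ((contOn_affine (x (0, i)) (x (1, i)) (β i) _
          (fun t ht => by have := htpos_Icc t ht; positivity)).mul
        (contOn_prod _ _ _ _ _ (fun j t ht => by
          have := htpos_Icc t ht; have := hx (0, j); have := hx (1, j); positivity)))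
  · -- measurability of F' x₀
    refine ContinuousOn.aestronglyMeasurable ?_ measurableSet_uIoc
    exact continuousOn_const.mul ((contOn_cpow_ofReal _ _ htpos_Ioc).mul
      ((contOn_affine (x (0, i)) (x (1, i)) (β i - 1) _
          (fun t ht => by have := htpos_Ioc t ht; positivity)).mul
        (contOn_prod _ _ _ _ _ (fun j t ht => by
          have := htpos_Ioc t ht; have := hx (0, j); have := hx (1, j); positivity))))
  · -- bound
    apply MeasureTheory.ae_of_all
    intro t ht s hs
    exact hC (s, t) ⟨Metric.ball_subset_closedBall hs,
      (by rw [hIcc]; rw [hIoc] at ht; exact Set.Ioc_subset_Icc_self ht)⟩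
  · exact intervalIntegrable_const
  · -- differentiability in s
    apply MeasureTheory.ae_of_all
    intro t ht s hs
    have htpos : 0 < t := htpos_Ioc t ht
    have hspos : 0 < s := hball s (Metric.ball_subset_closedBall hs)
    have h := hasDerivAt_affine' ((x (1, i) : ℂ) * (t : ℂ)) (β i) s
      (re_pos_aux s (x (1, i)) t (by positivity))
    have H := (h.mul_const (∏ j ∈ Finset.univ.erase i,
        ((x (0, j) : ℂ) + (x (1, j) : ℂ) * (t : ℂ)) ^ (β j))).const_mul ((t : ℂ) ^ (-c - 1))
    convert H using 1
    all_goals first | rfl | ring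

/-- d/dx_{2i} of Phi. -/
lemma pd1_Phi {n : ℕ} (β : Fin n → ℂ) (c : ℂ) {a b : ℝ} (ha : 0 < a) (hab : a < b)
    (x : (Fin 2 × Fin n) → ℝ) (hx : ∀ p, 0 < x p) (i : Fin n) :
    pd (1, i) (Phi β c a b) x
      = ∫ t in a..b, β i * ((t : ℂ) ^ (-c - 1) *
          (((x (0, i) : ℂ) + (x (1, i) : ℂ) * (t : ℂ)) ^ (β i - 1) *
            ((t : ℂ) * ∏ j ∈ Finset.univ.erase i,
              ((x (0, j) : ℂ) + (x (1, j) : ℂ) * (t : ℂ)) ^ (β j)))) := by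
  classical
  have hs₀pos : 0 < x (1, i) := hx _
  have hεpos : 0 < x (1, i) / 2 := by positivity
  have hupos : 0 < x (0, i) := hx _
  have hIoc : Set.uIoc a b = Set.Ioc a b := Set.uIoc_of_le hab.le
  have hIcc : Set.uIcc a b = Set.Icc a b := Set.uIcc_of_le hab.le
  have htpos_Ioc : ∀ t ∈ Set.uIoc a b, 0 < t := by
    intro t ht; rw [hIoc] at ht; exact ha.trans ht.1
  have htpos_Icc : ∀ t ∈ Set.uIcc a b, 0 < t := by
    intro t ht; rw [hIcc] at ht; exact lt_of_lt_of_le ha ht.1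
  have key : ∀ s : ℝ, Phi β c a b (Function.update x (1, i) s)
      = ∫ t in a..b, (t : ℂ) ^ (-c - 1) * (((x (0, i) : ℂ) + (s : ℂ) * (t : ℂ)) ^ (β i) *
          ∏ j ∈ Finset.univ.erase i, ((x (0, j) : ℂ) + (x (1, j) : ℂ) * (t : ℂ)) ^ (β j)) := by
    intro s
    rw [Phi]
    refine intervalIntegral.integral_congr fun t _ => ?_
    rw [← Finset.mul_prod_erase Finset.univ _ (Finset.mem_univ i)]
    have e1 : Function.update x (1, i) s (1, i) = s := Function.update_self _ _ _
    have e2 : Function.update x (1, i) s (0, i) = x (0, i) :=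
      Function.update_of_ne (by simp) _ _
    rw [e1, e2]
    congr 2
    exact Finset.prod_congr rfl fun j hj => by
      have hji : j ≠ i := Finset.ne_of_mem_erase hj
      rw [Function.update_of_ne (by simp [hji]), Function.update_of_ne (by simp [hji])]
  have hball : ∀ s ∈ Metric.closedBall (x (1, i)) (x (1, i) / 2), 0 < s := by
    intro s hs
    have h1 : |s - x (1, i)| ≤ x (1, i) / 2 := by
      rw [← Real.dist_eq]; exact Metric.mem_closedBall.mp hs
    linarith [(abs_le.mp h1).1]
  obtain ⟨C, hC⟩ : ∃ C, ∀ q ∈ (Metric.closedBall (x (1, i)) (x (1, i) / 2)) ×ˢ (Set.uIcc a b),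
      ‖β i * ((q.2 : ℂ) ^ (-c - 1) * (((x (0, i) : ℂ) + (q.1 : ℂ) * (q.2 : ℂ)) ^ (β i - 1) *
        ((q.2 : ℂ) * ∏ j ∈ Finset.univ.erase i,
          ((x (0, j) : ℂ) + (x (1, j) : ℂ) * (q.2 : ℂ)) ^ (β j))))‖ ≤ C := by
    apply ((isCompact_closedBall _ _).prod isCompact_uIcc).exists_bound_of_continuousOn
    intro q hq
    obtain ⟨hq1, hq2⟩ := hq
    have hq1pos : 0 < q.1 := hball _ hq1
    have hq2pos : 0 < q.2 := htpos_Icc _ hq2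
    apply ContinuousAt.continuousWithinAt
    refine continuousAt_const.mul (ContinuousAt.mul ?_ (ContinuousAt.mul ?_
      (ContinuousAt.mul (by fun_prop) ?_)))
    · exact ContinuousAt.cpow (by fun_prop) continuousAt_const (Or.inl (by simpa using hq2pos))
    · exact ContinuousAt.cpow (by fun_prop) continuousAt_const
        (re_pos_aux (x (0, i)) q.1 q.2 (by positivity))
    · exact tendsto_finset_prod _ fun j _ =>
        ContinuousAt.cpow (by fun_prop) continuousAt_const
          (re_pos_aux (x (0, j)) (x (1, j)) q.2 (by have := hx (0, j); have := hx (1, j); positivity))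
  have main := (intervalIntegral.hasDerivAt_integral_of_dominated_loc_of_deriv_le
      (μ := MeasureTheory.volume) (𝕜 := ℝ)
      (F := fun s t => (t : ℂ) ^ (-c - 1) * (((x (0, i) : ℂ) + (s : ℂ) * (t : ℂ)) ^ (β i) *
          ∏ j ∈ Finset.univ.erase i, ((x (0, j) : ℂ) + (x (1, j) : ℂ) * (t : ℂ)) ^ (β j)))
      (F' := fun s t => β i * ((t : ℂ) ^ (-c - 1) *
          (((x (0, i) : ℂ) + (s : ℂ) * (t : ℂ)) ^ (β i - 1) *
            ((t : ℂ) * ∏ j ∈ Finset.univ.erase i,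
              ((x (0, j) : ℂ) + (x (1, j) : ℂ) * (t : ℂ)) ^ (β j)))))
      (x₀ := x (1, i)) (s := Metric.ball (x (1, i)) (x (1, i) / 2)) (bound := fun _ => C) (a := a) (b := b)
      (Metric.ball_mem_nhds _ hεpos) ?_ ?_ ?_ ?_ ?_ ?_).2
  · unfold pd
    have heq : (fun s : ℝ => Phi β c a b (Function.update x (1, i) s))
        = fun s : ℝ => ∫ t in a..b, (t : ℂ) ^ (-c - 1) *
            (((x (0, i) : ℂ) + (s : ℂ) * (t : ℂ)) ^ (β i) *
              ∏ j ∈ Finset.univ.erase i, ((x (0, j) : ℂ) + (x (1, j) : ℂ) * (t : ℂ)) ^ (β j)) :=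
      funext key
    rw [heq]
    exact main.deriv
  · filter_upwards [Metric.ball_mem_nhds _ hεpos] with s hs
    have hspos : 0 < s := hball s (Metric.ball_subset_closedBall hs)
    refine ContinuousOn.aestronglyMeasurable ?_ measurableSet_uIoc
    exact (contOn_cpow_ofReal _ _ htpos_Ioc).mul
      ((contOn_affine (x (0, i)) s (β i) _ (fun t ht => by have := htpos_Ioc t ht; positivity)).mul
        (contOn_prod _ _ _ _ _ (fun j t ht => by
          have := htpos_Ioc t ht; have := hx (0, j); have := hx (1, j); positivity)))
  · apply ContinuousOn.intervalIntegrable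
    exact (contOn_cpow_ofReal _ _ htpos_Icc).mul
      ((contOn_affine (x (0, i)) (x (1, i)) (β i) _
          (fun t ht => by have := htpos_Icc t ht; positivity)).mul
        (contOn_prod _ _ _ _ _ (fun j t ht => by
          have := htpos_Icc t ht; have := hx (0, j); have := hx (1, j); positivity)))
  · refine ContinuousOn.aestronglyMeasurable ?_ measurableSet_uIoc
    exact continuousOn_const.mul ((contOn_cpow_ofReal _ _ htpos_Ioc).mul
      ((contOn_affine (x (0, i)) (x (1, i)) (β i - 1) _
          (fun t ht => by have := htpos_Ioc t ht; positivity)).mul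
        ((Complex.continuous_ofReal.continuousOn).mul
          (contOn_prod _ _ _ _ _ (fun j t ht => by
            have := htpos_Ioc t ht; have := hx (0, j); have := hx (1, j); positivity)))))
  · apply MeasureTheory.ae_of_all
    intro t ht s hs
    exact hC (s, t) ⟨Metric.ball_subset_closedBall hs,
      (by rw [hIcc]; rw [hIoc] at ht; exact Set.Ioc_subset_Icc_self ht)⟩
  · exact intervalIntegrable_const
  · apply MeasureTheory.ae_of_all
    intro t ht s hs
    have htpos : 0 < t := htpos_Ioc t ht
    have hspos : 0 < s := hball s (Metric.ball_subset_closedBall hs)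
    have h := hasDerivAt_affine ((x (0, i) : ℂ)) ((t : ℂ)) (β i) s
      (re_pos_aux (x (0, i)) t s (by positivity))
    have H := (h.mul_const (∏ j ∈ Finset.univ.erase i,
        ((x (0, j) : ℂ) + (x (1, j) : ℂ) * (t : ℂ)) ^ (β j))).const_mul ((t : ℂ) ^ (-c - 1))
    have H2 : (fun r : ℝ => (t : ℂ) ^ (-c - 1) *
          (((x (0, i) : ℂ) + (t : ℂ) * (r : ℂ)) ^ (β i) * ∏ j ∈ Finset.univ.erase i,
            ((x (0, j) : ℂ) + (x (1, j) : ℂ) * (t : ℂ)) ^ (β j)))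
        = (fun r : ℝ => (t : ℂ) ^ (-c - 1) *
          (((x (0, i) : ℂ) + (r : ℂ) * (t : ℂ)) ^ (β i) * ∏ j ∈ Finset.univ.erase i,
            ((x (0, j) : ℂ) + (x (1, j) : ℂ) * (t : ℂ)) ^ (β j))) := by
      funext r; rw [mul_comm ((t : ℝ) : ℂ) ((r : ℝ) : ℂ)]
    rw [H2] at H
    convert H using 1
    all_goals first | rfl | rw [mul_comm ((t : ℝ) : ℂ) ((s : ℝ) : ℂ)]
    beta_reduce
    ring

lemma prod_hasDerivAt {n : ℕ} (α : Fin n → ℂ) (x : (Fin 2 × Fin n) → ℝ)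
    (hx : ∀ p, 0 < x p) {t : ℝ} (ht : 0 < t) :
    HasDerivAt (fun r : ℝ => ∏ j, ((x (0, j) : ℂ) + (x (1, j) : ℂ) * (r : ℂ)) ^ α j)
      (∑ i, (∏ j ∈ Finset.univ.erase i, ((x (0, j) : ℂ) + (x (1, j) : ℂ) * (t : ℂ)) ^ α j) *
        (α i * ((x (0, i) : ℂ) + (x (1, i) : ℂ) * (t : ℂ)) ^ (α i - 1) * (x (1, i) : ℂ))) t := by
  have h := HasDerivAt.fun_finsetProd (u := Finset.univ) (x := t)
    (f := fun j (r : ℝ) => ((x (0, j) : ℂ) + (x (1, j) : ℂ) * (r : ℂ)) ^ α j)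
    (f' := fun j => α j * ((x (0, j) : ℂ) + (x (1, j) : ℂ) * (t : ℂ)) ^ (α j - 1) * (x (1, j) : ℂ))
    (fun j _ => hasDerivAt_affine _ _ _ t
      (re_pos_aux _ _ _ (by have := hx (0, j); have := hx (1, j); positivity)))
  simpa [smul_eq_mul] using h

lemma ibp {n : ℕ} (α : Fin n → ℂ) (δ : ℂ) {a b : ℝ} (ha : 0 < a) (hab : a < b)
    (x : (Fin 2 × Fin n) → ℝ) (hx : ∀ p, 0 < x p) :
    (∫ t in a..b, (t : ℂ) ^ (-δ) *
        ∑ i, (∏ j ∈ Finset.univ.erase i, ((x (0, j) : ℂ) + (x (1, j) : ℂ) * (t : ℂ)) ^ α j) *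
          (α i * ((x (0, i) : ℂ) + (x (1, i) : ℂ) * (t : ℂ)) ^ (α i - 1) * (x (1, i) : ℂ)))
      = δ * (∫ t in a..b, (t : ℂ) ^ (-δ - 1) *
          ∏ j, ((x (0, j) : ℂ) + (x (1, j) : ℂ) * (t : ℂ)) ^ α j)
        + ((b : ℂ) ^ (-δ) * ∏ j, ((x (0, j) : ℂ) + (x (1, j) : ℂ) * (b : ℂ)) ^ α j
          - (a : ℂ) ^ (-δ) * ∏ j, ((x (0, j) : ℂ) + (x (1, j) : ℂ) * (a : ℂ)) ^ α j) := by
  have hIcc : Set.uIcc a b = Set.Icc a b := Set.uIcc_of_le hab.le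
  have htpos_Icc : ∀ t ∈ Set.uIcc a b, 0 < t := by
    intro t ht; rw [hIcc] at ht; exact lt_of_lt_of_le ha ht.1
  have hbase : ∀ (j : Fin n) (t : ℝ), t ∈ Set.uIcc a b → 0 < x (0, j) + x (1, j) * t := by
    intro j t ht
    have := htpos_Icc t ht; have := hx (0, j); have := hx (1, j); positivity
  have H := intervalIntegral.integral_mul_deriv_eq_deriv_mul_of_hasDerivAt
    (a := a) (b := b)
    (u := fun t : ℝ => (t : ℂ) ^ (-δ))
    (v := fun t : ℝ => ∏ j, ((x (0, j) : ℂ) + (x (1, j) : ℂ) * (t : ℂ)) ^ α j)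
    (u' := fun t : ℝ => -δ * (t : ℂ) ^ (-δ - 1))
    (v' := fun t : ℝ =>
      ∑ i, (∏ j ∈ Finset.univ.erase i, ((x (0, j) : ℂ) + (x (1, j) : ℂ) * (t : ℂ)) ^ α j) *
        (α i * ((x (0, i) : ℂ) + (x (1, i) : ℂ) * (t : ℂ)) ^ (α i - 1) * (x (1, i) : ℂ)))
    (contOn_cpow_ofReal _ _ htpos_Icc)
    (contOn_prod _ _ _ _ _ hbase)
    ?_ ?_ ?_ ?_
  · rw [H]
    have h2 : (∫ t in a..b, (-δ * (t : ℂ) ^ (-δ - 1)) *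
          ∏ j, ((x (0, j) : ℂ) + (x (1, j) : ℂ) * (t : ℂ)) ^ α j)
        = -δ * ∫ t in a..b, (t : ℂ) ^ (-δ - 1) *
            ∏ j, ((x (0, j) : ℂ) + (x (1, j) : ℂ) * (t : ℂ)) ^ α j := by
      rw [← intervalIntegral.integral_const_mul]
      exact intervalIntegral.integral_congr fun t _ => by ring
    rw [h2]
    ring
  · intro t ht
    rw [min_eq_left hab.le, max_eq_right hab.le] at ht
    have ht0 : 0 < t := ha.trans ht.1
    exact hasDerivAt_cpow_ofReal (-δ) ht0
  · intro t ht
    rw [min_eq_left hab.le, max_eq_right hab.le] at ht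
    exact prod_hasDerivAt α x hx (ha.trans ht.1)
  · apply ContinuousOn.intervalIntegrable
    exact continuousOn_const.mul (contOn_cpow_ofReal _ _ htpos_Icc)
  · apply ContinuousOn.intervalIntegrable
    apply continuousOn_finset_sum
    intro i _
    exact (contOn_prod _ _ _ _ _ (fun j t ht => hbase j t ht)).mul
      ((continuousOn_const.mul (contOn_affine _ _ _ _
        (fun t ht => hbase i t ht))).mul continuousOn_const)

end Stmt15Aux

open Stmt15Aux in
/-- up-step contiguity in `a_{2k}`, where `Ψ = Φ(α − e_k, δ − 1; ·)`:
`Σ_{i≠k} x_{1k}x_{2i}·∂Ψ/∂x_{1i} + x_{2k}·Σ_{i≠k} x_{2i}·∂Ψ/∂x_{2i} + α_k·x_{2k}·Ψ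
  = δ·Φ(α,δ;x) + [g(t,x)]_{t=a}^{t=b}`. -/
theorem stmt15 {n : ℕ} (hn : 1 ≤ n) (α : Fin n → ℂ) (δ : ℂ) (a b : ℝ)
    (ha : 0 < a) (hab : a < b) (hδ : 0 < (-δ - 1).re) (hα : ∀ k, 0 < (α k).re)
    (k : Fin n) (x : (Fin 2 × Fin n) → ℝ) (hx : ∀ p, 0 < x p) :
    ∑ i ∈ Finset.univ \ {k},
        ((x (0, k) * x (1, i) : ℝ) : ℂ)
          * pd (0, i) (Phi (Function.update α k (α k - 1)) (δ - 1) a b) x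
      + (x (1, k) : ℂ) * ∑ i ∈ Finset.univ \ {k},
          (x (1, i) : ℂ)
            * pd (1, i) (Phi (Function.update α k (α k - 1)) (δ - 1) a b) x
      + α k * (x (1, k) : ℂ) * Phi (Function.update α k (α k - 1)) (δ - 1) a b x
      = δ * Phi α δ a b x + (gfun α δ b x - gfun α δ a x) := by
  classical
  set β : Fin n → ℂ := Function.update α k (α k - 1) with hβdef
  have hIcc : Set.uIcc a b = Set.Icc a b := Set.uIcc_of_le hab.le
  have htpos_Icc : ∀ t ∈ Set.uIcc a b, 0 < t := by
    intro t ht; rw [hIcc] at ht; exact lt_of_lt_of_le ha ht.1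
  have hbase : ∀ (j : Fin n) (t : ℝ), t ∈ Set.uIcc a b → 0 < x (0, j) + x (1, j) * t := by
    intro j t ht; have := htpos_Icc t ht; have := hx (0, j); have := hx (1, j); positivity
  have hInt0 : ∀ i : Fin n, IntervalIntegrable (fun t : ℝ => β i * ((t : ℂ) ^ (-(δ - 1) - 1) *
      (((x (0, i) : ℂ) + (x (1, i) : ℂ) * (t : ℂ)) ^ (β i - 1) *
        ∏ j ∈ Finset.univ.erase i, ((x (0, j) : ℂ) + (x (1, j) : ℂ) * (t : ℂ)) ^ (β j))))
      MeasureTheory.volume a b := by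
    intro i
    apply ContinuousOn.intervalIntegrable
    exact continuousOn_const.mul ((contOn_cpow_ofReal _ _ htpos_Icc).mul
      ((contOn_affine _ _ _ _ (fun t ht => hbase i t ht)).mul
        (contOn_prod _ _ _ _ _ (fun j t ht => hbase j t ht))))
  have hInt1 : ∀ i : Fin n, IntervalIntegrable (fun t : ℝ => β i * ((t : ℂ) ^ (-(δ - 1) - 1) *
      (((x (0, i) : ℂ) + (x (1, i) : ℂ) * (t : ℂ)) ^ (β i - 1) *
        ((t : ℂ) * ∏ j ∈ Finset.univ.erase i,
          ((x (0, j) : ℂ) + (x (1, j) : ℂ) * (t : ℂ)) ^ (β j)))))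
      MeasureTheory.volume a b := by
    intro i
    apply ContinuousOn.intervalIntegrable
    exact continuousOn_const.mul ((contOn_cpow_ofReal _ _ htpos_Icc).mul
      ((contOn_affine _ _ _ _ (fun t ht => hbase i t ht)).mul
        ((Complex.continuous_ofReal.continuousOn).mul
          (contOn_prod _ _ _ _ _ (fun j t ht => hbase j t ht)))))
  have hIntPsi : IntervalIntegrable (fun t : ℝ => α k * (x (1, k) : ℂ) *
      ((t : ℂ) ^ (-(δ - 1) - 1) * ∏ j, ((x (0, j) : ℂ) + (x (1, j) : ℂ) * (t : ℂ)) ^ (β j)))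
      MeasureTheory.volume a b := by
    apply ContinuousOn.intervalIntegrable
    exact continuousOn_const.mul ((contOn_cpow_ofReal _ _ htpos_Icc).mul
      (contOn_prod _ _ _ _ _ (fun j t ht => hbase j t ht)))
  have hsum1 : (∑ i ∈ Finset.univ \ {k}, ((x (0, k) * x (1, i) : ℝ) : ℂ)
        * pd (0, i) (Phi β (δ - 1) a b) x)
      = ∫ t in a..b, ∑ i ∈ Finset.univ \ {k}, ((x (0, k) * x (1, i) : ℝ) : ℂ) *
          (β i * ((t : ℂ) ^ (-(δ - 1) - 1) *
            (((x (0, i) : ℂ) + (x (1, i) : ℂ) * (t : ℂ)) ^ (β i - 1) *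
              ∏ j ∈ Finset.univ.erase i,
                ((x (0, j) : ℂ) + (x (1, j) : ℂ) * (t : ℂ)) ^ (β j)))) := by
    rw [intervalIntegral.integral_finset_sum (fun i _ => (hInt0 i).const_mul _)]
    refine Finset.sum_congr rfl fun i _ => ?_
    rw [pd0_Phi β (δ - 1) ha hab x hx i]
    exact (intervalIntegral.integral_const_mul _ _).symm
  have hsum2 : (x (1, k) : ℂ) * (∑ i ∈ Finset.univ \ {k}, (x (1, i) : ℂ)
        * pd (1, i) (Phi β (δ - 1) a b) x)
      = ∫ t in a..b, (x (1, k) : ℂ) * ∑ i ∈ Finset.univ \ {k}, (x (1, i) : ℂ) *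
          (β i * ((t : ℂ) ^ (-(δ - 1) - 1) *
            (((x (0, i) : ℂ) + (x (1, i) : ℂ) * (t : ℂ)) ^ (β i - 1) *
              ((t : ℂ) * ∏ j ∈ Finset.univ.erase i,
                ((x (0, j) : ℂ) + (x (1, j) : ℂ) * (t : ℂ)) ^ (β j))))) := by
    rw [intervalIntegral.integral_const_mul,
      intervalIntegral.integral_finset_sum (fun i _ => (hInt1 i).const_mul _)]
    congr 1
    refine Finset.sum_congr rfl fun i _ => ?_
    rw [pd1_Phi β (δ - 1) ha hab x hx i]
    exact (intervalIntegral.integral_const_mul _ _).symm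
  have hpsi : α k * (x (1, k) : ℂ) * Phi β (δ - 1) a b x
      = ∫ t in a..b, α k * (x (1, k) : ℂ) * ((t : ℂ) ^ (-(δ - 1) - 1) *
          ∏ j, ((x (0, j) : ℂ) + (x (1, j) : ℂ) * (t : ℂ)) ^ (β j)) := by
    rw [Phi, intervalIntegral.integral_const_mul]
  have hAint : IntervalIntegrable (fun t : ℝ =>
      ∑ i ∈ Finset.univ \ {k}, ((x (0, k) * x (1, i) : ℝ) : ℂ) *
        (β i * ((t : ℂ) ^ (-(δ - 1) - 1) *
          (((x (0, i) : ℂ) + (x (1, i) : ℂ) * (t : ℂ)) ^ (β i - 1) *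
            ∏ j ∈ Finset.univ.erase i,
              ((x (0, j) : ℂ) + (x (1, j) : ℂ) * (t : ℂ)) ^ (β j)))))
      MeasureTheory.volume a b := by
    have h := IntervalIntegrable.sum (μ := MeasureTheory.volume) (a := a) (b := b)
      (Finset.univ \ {k})
      (f := fun i (t : ℝ) => ((x (0, k) * x (1, i) : ℝ) : ℂ) *
        (β i * ((t : ℂ) ^ (-(δ - 1) - 1) *
          (((x (0, i) : ℂ) + (x (1, i) : ℂ) * (t : ℂ)) ^ (β i - 1) *
            ∏ j ∈ Finset.univ.erase i,
              ((x (0, j) : ℂ) + (x (1, j) : ℂ) * (t : ℂ)) ^ (β j)))))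
      (fun i _ => (hInt0 i).const_mul _)
    rw [Finset.sum_fn] at h; exact h
  have hBint : IntervalIntegrable (fun t : ℝ =>
      (x (1, k) : ℂ) * ∑ i ∈ Finset.univ \ {k}, (x (1, i) : ℂ) *
        (β i * ((t : ℂ) ^ (-(δ - 1) - 1) *
          (((x (0, i) : ℂ) + (x (1, i) : ℂ) * (t : ℂ)) ^ (β i - 1) *
            ((t : ℂ) * ∏ j ∈ Finset.univ.erase i,
              ((x (0, j) : ℂ) + (x (1, j) : ℂ) * (t : ℂ)) ^ (β j))))))
      MeasureTheory.volume a b := by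
    apply IntervalIntegrable.const_mul
    have h := IntervalIntegrable.sum (μ := MeasureTheory.volume) (a := a) (b := b)
      (Finset.univ \ {k})
      (f := fun i (t : ℝ) => (x (1, i) : ℂ) *
        (β i * ((t : ℂ) ^ (-(δ - 1) - 1) *
          (((x (0, i) : ℂ) + (x (1, i) : ℂ) * (t : ℂ)) ^ (β i - 1) *
            ((t : ℂ) * ∏ j ∈ Finset.univ.erase i,
              ((x (0, j) : ℂ) + (x (1, j) : ℂ) * (t : ℂ)) ^ (β j))))))
      (fun i _ => (hInt1 i).const_mul _)
    rw [Finset.sum_fn] at h; exact h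
  rw [hsum1, hsum2, hpsi]
  rw [← intervalIntegral.integral_add hAint hBint,
    ← intervalIntegral.integral_add (hAint.add hBint) hIntPsi]
  have hpoint : Set.EqOn
      (fun t : ℝ =>
        (∑ i ∈ Finset.univ \ {k}, ((x (0, k) * x (1, i) : ℝ) : ℂ) *
          (β i * ((t : ℂ) ^ (-(δ - 1) - 1) *
            (((x (0, i) : ℂ) + (x (1, i) : ℂ) * (t : ℂ)) ^ (β i - 1) *
              ∏ j ∈ Finset.univ.erase i,
                ((x (0, j) : ℂ) + (x (1, j) : ℂ) * (t : ℂ)) ^ (β j)))))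
        + (x (1, k) : ℂ) * ∑ i ∈ Finset.univ \ {k}, (x (1, i) : ℂ) *
          (β i * ((t : ℂ) ^ (-(δ - 1) - 1) *
            (((x (0, i) : ℂ) + (x (1, i) : ℂ) * (t : ℂ)) ^ (β i - 1) *
              ((t : ℂ) * ∏ j ∈ Finset.univ.erase i,
                ((x (0, j) : ℂ) + (x (1, j) : ℂ) * (t : ℂ)) ^ (β j)))))
        + α k * (x (1, k) : ℂ) * ((t : ℂ) ^ (-(δ - 1) - 1) *
          ∏ j, ((x (0, j) : ℂ) + (x (1, j) : ℂ) * (t : ℂ)) ^ (β j)))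
      (fun t : ℝ => (t : ℂ) ^ (-δ) *
        ∑ i, (∏ j ∈ Finset.univ.erase i, ((x (0, j) : ℂ) + (x (1, j) : ℂ) * (t : ℂ)) ^ α j) *
          (α i * ((x (0, i) : ℂ) + (x (1, i) : ℂ) * (t : ℂ)) ^ (α i - 1) * (x (1, i) : ℂ)))
      (Set.uIcc a b) := by
    intro t ht
    have ht0 : 0 < t := htpos_Icc t ht
    have hzne : ∀ j : Fin n, ((x (0, j) : ℂ) + (x (1, j) : ℂ) * (t : ℂ)) ≠ 0 := fun j =>
      Complex.slitPlane_ne_zero (re_pos_aux _ _ _ (hbase j t ht))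
    have hexp : -(δ - 1) - 1 = -δ := by ring
    simp only [hexp, Finset.sdiff_singleton_eq_erase]
    rw [← Finset.add_sum_erase Finset.univ _ (Finset.mem_univ k)]
    have hβk : β k = α k - 1 := by rw [hβdef]; exact Function.update_self _ _ _
    have hterm : ∀ i ∈ Finset.univ.erase k,
        ((x (0, k) * x (1, i) : ℝ) : ℂ) *
          (β i * ((t : ℂ) ^ (-δ) *
            (((x (0, i) : ℂ) + (x (1, i) : ℂ) * (t : ℂ)) ^ (β i - 1) *
              ∏ j ∈ Finset.univ.erase i,
                ((x (0, j) : ℂ) + (x (1, j) : ℂ) * (t : ℂ)) ^ (β j))))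
        + (x (1, k) : ℂ) * ((x (1, i) : ℂ) *
          (β i * ((t : ℂ) ^ (-δ) *
            (((x (0, i) : ℂ) + (x (1, i) : ℂ) * (t : ℂ)) ^ (β i - 1) *
              ((t : ℂ) * ∏ j ∈ Finset.univ.erase i,
                ((x (0, j) : ℂ) + (x (1, j) : ℂ) * (t : ℂ)) ^ (β j))))))
        = (t : ℂ) ^ (-δ) *
          ((∏ j ∈ Finset.univ.erase i, ((x (0, j) : ℂ) + (x (1, j) : ℂ) * (t : ℂ)) ^ α j) *
            (α i * ((x (0, i) : ℂ) + (x (1, i) : ℂ) * (t : ℂ)) ^ (α i - 1) * (x (1, i) : ℂ))) := by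
      intro i hi
      have hik : i ≠ k := Finset.ne_of_mem_erase hi
      have hkmem : k ∈ Finset.univ.erase i :=
        Finset.mem_erase.mpr ⟨hik.symm, Finset.mem_univ k⟩
      have hβi : β i = α i := by rw [hβdef]; exact Function.update_of_ne hik _ _
      rw [← Finset.mul_prod_erase (Finset.univ.erase i)
          (fun j => ((x (0, j) : ℂ) + (x (1, j) : ℂ) * (t : ℂ)) ^ (β j)) hkmem,
        ← Finset.mul_prod_erase (Finset.univ.erase i)
          (fun j => ((x (0, j) : ℂ) + (x (1, j) : ℂ) * (t : ℂ)) ^ (α j)) hkmem]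
      have hprodeq : (∏ j ∈ (Finset.univ.erase i).erase k,
            ((x (0, j) : ℂ) + (x (1, j) : ℂ) * (t : ℂ)) ^ (β j))
          = ∏ j ∈ (Finset.univ.erase i).erase k,
            ((x (0, j) : ℂ) + (x (1, j) : ℂ) * (t : ℂ)) ^ (α j) :=
        Finset.prod_congr rfl fun j hj => by
          have : β j = α j := by
            rw [hβdef]; exact Function.update_of_ne (Finset.ne_of_mem_erase hj) _ _
          rw [this]
      rw [hprodeq, hβi, hβk]
      have hZk : ((x (0, k) : ℂ) + (x (1, k) : ℂ) * (t : ℂ)) ^ (α k)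
          = ((x (0, k) : ℂ) + (x (1, k) : ℂ) * (t : ℂ)) ^ (α k - 1) *
            ((x (0, k) : ℂ) + (x (1, k) : ℂ) * (t : ℂ)) := by
        conv_lhs => rw [show α k = (α k - 1) + 1 by ring]
        rw [Complex.cpow_add _ _ (hzne k), Complex.cpow_one]
      rw [hZk]
      push_cast
      ring
    have hksplit : α k * (x (1, k) : ℂ) * ((t : ℂ) ^ (-δ) *
          ∏ j, ((x (0, j) : ℂ) + (x (1, j) : ℂ) * (t : ℂ)) ^ (β j))
        = (t : ℂ) ^ (-δ) *
          ((∏ j ∈ Finset.univ.erase k, ((x (0, j) : ℂ) + (x (1, j) : ℂ) * (t : ℂ)) ^ α j) *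
            (α k * ((x (0, k) : ℂ) + (x (1, k) : ℂ) * (t : ℂ)) ^ (α k - 1) * (x (1, k) : ℂ))) := by
      rw [← Finset.mul_prod_erase Finset.univ
          (fun j => ((x (0, j) : ℂ) + (x (1, j) : ℂ) * (t : ℂ)) ^ (β j)) (Finset.mem_univ k)]
      have hprodeq : (∏ j ∈ Finset.univ.erase k,
            ((x (0, j) : ℂ) + (x (1, j) : ℂ) * (t : ℂ)) ^ (β j))
          = ∏ j ∈ Finset.univ.erase k,
            ((x (0, j) : ℂ) + (x (1, j) : ℂ) * (t : ℂ)) ^ (α j) :=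
        Finset.prod_congr rfl fun j hj => by
          have : β j = α j := by
            rw [hβdef]; exact Function.update_of_ne (Finset.ne_of_mem_erase hj) _ _
          rw [this]
      rw [hprodeq, hβk]
      ring
    rw [Finset.mul_sum, ← Finset.sum_add_distrib]
    rw [mul_add, Finset.mul_sum]
    rw [Finset.sum_congr rfl hterm, hksplit]
    exact add_comm _ _
  rw [intervalIntegral.integral_congr hpoint]
  rw [ibp α δ ha hab x hx, Phi, gfun, gfun]
end

section
/- (Contiguity: down shift with respect to e_{n+1}.) Fix k with 1 ≤ k ≤ n. Then at every point x with all coordinates positive, applying the operator S₁ = Σ_{i≠k} (x_{1i}x_{2k} − x_{1k}x_{2i})·∂/∂x_{2i} + (Σ_{i=1}^n α_i)·x_{1k} to the function x ↦ ∂Φ(α, δ+1; x)/∂x_{2k} yields α_k·(Σ_{i=1}^n α_i − δ)·Φ(α,δ;x) − α_k·[g(t,x)]_{t=a}^{t=b}. -/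
open Complex Function

open MeasureTheory Metric Filter Set intervalIntegral

namespace S17

variable {n : ℕ}


noncomputable def u (x : (Fin 2 × Fin n) → ℝ) (j : Fin n) (t : ℝ) : ℂ :=
  (x (0, j) : ℂ) + (x (1, j) : ℂ) * (t : ℂ)

lemma u_eq (x : (Fin 2 × Fin n) → ℝ) (j : Fin n) (t : ℝ) :
    u x j t = ((x (0, j) + x (1, j) * t : ℝ) : ℂ) := by
  unfold u; push_cast; ring

lemma u_slit {x : (Fin 2 × Fin n) → ℝ} (hx : ∀ p, 0 < x p) (j : Fin n) {t : ℝ}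
    (ht : 0 < t) : u x j t ∈ Complex.slitPlane := by
  rw [u_eq, Complex.ofReal_mem_slitPlane]
  exact add_pos (hx _) (mul_pos (hx _) ht)

lemma u_ne {x : (Fin 2 × Fin n) → ℝ} (hx : ∀ p, 0 < x p) (j : Fin n) {t : ℝ}
    (ht : 0 < t) : u x j t ≠ 0 :=
  Complex.slitPlane_ne_zero (u_slit hx j ht)

lemma contAt_ofReal_cpow {e : ℂ} {t : ℝ} (ht : 0 < t) :
    ContinuousAt (fun s : ℝ => (s : ℂ) ^ e) t :=
  (Complex.continuous_ofReal.continuousAt).cpow continuousAt_const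
    (Complex.ofReal_mem_slitPlane.mpr ht)

lemma contAt_u_cpow {x : (Fin 2 × Fin n) → ℝ} (hx : ∀ p, 0 < x p) (j : Fin n)
    {e : ℂ} {t : ℝ} (ht : 0 < t) :
    ContinuousAt (fun s : ℝ => u x j s ^ e) t :=
  (Continuous.continuousAt (by unfold u; fun_prop)).cpow continuousAt_const (u_slit hx j ht)

lemma contOn_kernel {x : (Fin 2 × Fin n) → ℝ} (hx : ∀ p, 0 < x p) (β : Fin n → ℂ)
    (e : ℂ) {S : Set ℝ} (hS : ∀ t ∈ S, 0 < t) :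
    ContinuousOn (fun t : ℝ => (t : ℂ) ^ e * ∏ j, u x j t ^ β j) S :=
  ContinuousOn.mul (fun t ht => (contAt_ofReal_cpow (hS t ht)).continuousWithinAt)
    (continuousOn_finset_prod _ fun j _ => fun t ht =>
      (contAt_u_cpow hx j (hS t ht)).continuousWithinAt)

lemma mem_uIcc_pos {a b t : ℝ} (ha : 0 < a) (hab : a ≤ b) (ht : t ∈ Set.uIcc a b) :
    0 < t := by
  rw [Set.uIcc_of_le hab] at ht; exact ha.trans_le ht.1

lemma intInt_kernel {x : (Fin 2 × Fin n) → ℝ} (hx : ∀ p, 0 < x p) (β : Fin n → ℂ)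
    (e : ℂ) {a b : ℝ} (ha : 0 < a) (hab : a ≤ b) :
    IntervalIntegrable (fun t : ℝ => (t : ℂ) ^ e * ∏ j, u x j t ^ β j) volume a b :=
  (contOn_kernel hx β e fun t ht => mem_uIcc_pos ha hab ht).intervalIntegrable

lemma Phi_eq (β : Fin n → ℂ) (γ : ℂ) (a b : ℝ) (x : (Fin 2 × Fin n) → ℝ) :
    Phi β γ a b x = ∫ t in a..b, (t : ℂ) ^ (-γ - 1) * ∏ j, u x j t ^ β j := rfl

lemma prod_pow_update (w : Fin n → ℂ) (β : Fin n → ℂ) (s : Finset (Fin n)) {i : Fin n}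
    (hi : i ∈ s) (c : ℂ) :
    ∏ j ∈ s, w j ^ (Function.update β i c j)
      = w i ^ c * ∏ j ∈ s.erase i, w j ^ β j := by
  rw [← Finset.mul_prod_erase s _ hi, Function.update_self]
  exact congrArg _ (Finset.prod_congr rfl fun j hj => by
    rw [Function.update_of_ne (Finset.ne_of_mem_erase hj)])

lemma ne01 (j i : Fin n) : ((0 : Fin 2), j) ≠ ((1 : Fin 2), i) := by
  simp [Prod.ext_iff]

lemma ne11 {j i : Fin n} (h : j ≠ i) : ((1 : Fin 2), j) ≠ ((1 : Fin 2), i) := by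
  simp [Prod.ext_iff, h]

lemma update_pos {x : (Fin 2 × Fin n) → ℝ} (hx : ∀ p, 0 < x p) {q : Fin 2 × Fin n}
    {s : ℝ} (hs : 0 < s) : ∀ p, 0 < (Function.update x q s) p := by
  intro p
  rcases eq_or_ne p q with h | h
  · rw [h, Function.update_self]; exact hs
  · rw [Function.update_of_ne h]; exact hx p

lemma hasDerivAt_phi (β : Fin n → ℂ) (γ : ℂ) {a b : ℝ} (ha : 0 < a) (hab : a < b)
    (i : Fin n) (x : (Fin 2 × Fin n) → ℝ) (hx : ∀ p, 0 < x p) :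
    HasDerivAt (fun s : ℝ => Phi β γ a b (Function.update x (1, i) s))
      (β i * Phi (Function.update β i (β i - 1)) (γ - 1) a b x) (x (1, i)) := by
  have hs₀ : (0 : ℝ) < x (1, i) := hx _
  set s₀ : ℝ := x (1, i) with hs₀def
  set K : ℝ → ℂ := fun t => (t : ℂ) ^ (-γ - 1) * ∏ j ∈ Finset.univ.erase i, u x j t ^ β j
    with hK
  have contK : ContinuousOn K (Set.Ioi (0 : ℝ)) := by
    rw [hK]
    exact ContinuousOn.mul (fun t ht => (contAt_ofReal_cpow ht).continuousWithinAt)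
      (continuousOn_finset_prod _ fun j _ => fun t ht =>
        (contAt_u_cpow hx j ht).continuousWithinAt)
  have contKAt : ∀ {t : ℝ}, 0 < t → ContinuousAt K t := fun ht =>
    contK.continuousAt (isOpen_Ioi.mem_nhds ht)
  set F : ℝ → ℝ → ℂ := fun s t => ((x (0, i) : ℂ) + (s : ℂ) * (t : ℂ)) ^ β i * K t with hF
  set F' : ℝ → ℝ → ℂ := fun s t =>
    (β i * ((x (0, i) : ℂ) + (s : ℂ) * (t : ℂ)) ^ (β i - 1) * (t : ℂ)) * K t with hF'
  have hfun : ∀ s : ℝ, Phi β γ a b (Function.update x (1, i) s) = ∫ t in a..b, F s t := by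
    intro s
    unfold Phi
    congr 1
    funext t
    rw [← Finset.mul_prod_erase Finset.univ _ (Finset.mem_univ i)]
    have h3 : (∏ j ∈ Finset.univ.erase i,
        ((((Function.update x (1, i) s) (0, j) : ℝ) : ℂ)
            + (((Function.update x (1, i) s) (1, j) : ℝ) : ℂ) * (t : ℂ)) ^ β j)
        = ∏ j ∈ Finset.univ.erase i, u x j t ^ β j :=
      Finset.prod_congr rfl fun j hj => by
        rw [Function.update_of_ne (ne01 j i),
          Function.update_of_ne (ne11 (Finset.ne_of_mem_erase hj))]
        rfl
    rw [h3]
    simp only [hF, hK, Function.update_self, Function.update_of_ne (ne01 i i)]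
    ring
  set ε : ℝ := s₀ / 2 with hε
  have hε_pos : 0 < ε := half_pos hs₀
  have hιIoc : Set.uIoc a b = Set.Ioc a b := Set.uIoc_of_le hab.le
  have hpos : ∀ t ∈ Set.uIoc a b, 0 < t := by
    intro t ht; rw [hιIoc] at ht; exact ha.trans ht.1
  have hcontF : ∀ s : ℝ, 0 < s → ContinuousOn (F s) (Set.Ioi (0 : ℝ)) := by
    intro s hs
    rw [hF]
    apply ContinuousOn.mul _ contK
    intro t ht
    refine ((Continuous.continuousAt (by fun_prop)).cpow continuousAt_const ?_).continuousWithinAt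
    have he : ((x (0, i) : ℂ) + (s : ℂ) * (t : ℂ)) = ((x (0, i) + s * t : ℝ) : ℂ) := by
      push_cast; ring
    rw [he, Complex.ofReal_mem_slitPlane]
    exact add_pos (hx _) (mul_pos hs ht)
  have hball_pos : ∀ s ∈ closedBall s₀ ε, 0 < s := by
    intro s hs
    rw [mem_closedBall, Real.dist_eq, abs_le] at hs
    have h1 := hs.1
    rw [hε] at h1
    linarith
  have contF' : ContinuousOn (fun p : ℝ × ℝ => F' p.1 p.2)
      (closedBall s₀ ε ×ˢ Set.Icc a b) := by
    rw [hF']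
    intro p hp
    have hp1 : 0 < p.1 := hball_pos _ hp.1
    have hp2 : 0 < p.2 := ha.trans_le hp.2.1
    apply ContinuousAt.continuousWithinAt
    have c1 : ContinuousAt (fun p : ℝ × ℝ => ((x (0, i) : ℂ) + (p.1 : ℂ) * (p.2 : ℂ))) p := by
      fun_prop
    have hslit : ((x (0, i) : ℂ) + (p.1 : ℂ) * (p.2 : ℂ)) ∈ Complex.slitPlane := by
      have he : ((x (0, i) : ℂ) + (p.1 : ℂ) * (p.2 : ℂ)) = ((x (0, i) + p.1 * p.2 : ℝ) : ℂ) := by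
        push_cast; ring
      rw [he, Complex.ofReal_mem_slitPlane]
      exact add_pos (hx _) (mul_pos hp1 hp2)
    have c2 := c1.cpow (g := fun _ => β i - 1) continuousAt_const hslit
    have c3 : ContinuousAt (fun p : ℝ × ℝ => ((p.2 : ℝ) : ℂ)) p := by fun_prop
    have c4 : ContinuousAt (fun p : ℝ × ℝ => K p.2) p := (contKAt hp2).comp continuousAt_snd
    exact ((continuousAt_const.mul c2).mul c3).mul c4
  obtain ⟨C, hC⟩ := ((isCompact_closedBall s₀ ε).prod isCompact_Icc).exists_bound_of_continuousOn
    contF'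
  have main := intervalIntegral.hasDerivAt_integral_of_dominated_loc_of_deriv_le
    (F := F) (F' := F') (x₀ := s₀) (bound := fun _ => C) (a := a) (b := b)
    (μ := volume) (Metric.ball_mem_nhds s₀ hε_pos)
    (by
      filter_upwards [eventually_gt_nhds hs₀] with s hs
      exact ((hcontF s hs).mono (fun t ht => hpos t ht)).aestronglyMeasurable
        measurableSet_uIoc)
    (((hcontF s₀ hs₀).mono (fun t ht => mem_uIcc_pos ha hab.le ht)).intervalIntegrable)
    (by
      have hco : ContinuousOn (F' s₀) (Set.uIoc a b) := by
        intro t ht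
        have ht0 : 0 < t := hpos t ht
        apply ContinuousAt.continuousWithinAt
        rw [hF']
        have c1 : ContinuousAt (fun t : ℝ => ((x (0, i) : ℂ) + (s₀ : ℂ) * (t : ℂ))) t := by
          fun_prop
        have hslit : ((x (0, i) : ℂ) + (s₀ : ℂ) * (t : ℂ)) ∈ Complex.slitPlane := by
          have he : ((x (0, i) : ℂ) + (s₀ : ℂ) * (t : ℂ)) = ((x (0, i) + s₀ * t : ℝ) : ℂ) := by
            push_cast; ring
          rw [he, Complex.ofReal_mem_slitPlane]
          exact add_pos (hx _) (mul_pos hs₀ ht0)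
        exact ((continuousAt_const.mul (c1.cpow (g := fun _ => β i - 1) continuousAt_const hslit)).mul
          Complex.continuous_ofReal.continuousAt).mul (contKAt ht0)
      exact hco.aestronglyMeasurable measurableSet_uIoc)
    (by
      refine Eventually.of_forall fun t => fun ht => fun s hs => ?_
      exact hC (s, t) ⟨ball_subset_closedBall hs, Set.Ioc_subset_Icc_self (hιIoc ▸ ht)⟩)
    intervalIntegrable_const
    (by
      refine Eventually.of_forall fun t => fun ht => fun s hs => ?_
      have ht0 : 0 < t := hpos t ht
      have hs0 : 0 < s := hball_pos s (ball_subset_closedBall hs)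
      have hb : HasDerivAt (fun s : ℝ => ((x (0, i) : ℂ) + (s : ℂ) * (t : ℂ))) ((t : ℝ) : ℂ) s := by
        simpa using (Complex.ofRealCLM.hasDerivAt.mul_const ((t : ℝ) : ℂ)).const_add
          ((x (0, i) : ℝ) : ℂ)
      have hslit : ((x (0, i) : ℂ) + (s : ℂ) * (t : ℂ)) ∈ Complex.slitPlane := by
        have he : ((x (0, i) : ℂ) + (s : ℂ) * (t : ℂ)) = ((x (0, i) + s * t : ℝ) : ℂ) := by
          push_cast; ring
        rw [he, Complex.ofReal_mem_slitPlane]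
        exact add_pos (hx _) (mul_pos hs0 ht0)
      have hcp := ((Complex.hasStrictDerivAt_cpow_const (c := β i) hslit).hasDerivAt.comp s hb)
      have hcp2 : HasDerivAt (fun s : ℝ => ((x (0, i) : ℂ) + (s : ℂ) * (t : ℂ)) ^ β i)
          (β i * ((x (0, i) : ℂ) + (s : ℂ) * (t : ℂ)) ^ (β i - 1) * (t : ℂ)) s := by
        simpa [Function.comp_def] using hcp
      exact hcp2.mul_const (K t))
  have h3 : HasDerivAt (fun s : ℝ => Phi β γ a b (Function.update x (1, i) s))
      (∫ t in a..b, F' s₀ t) s₀ :=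
    main.2.congr_of_eventuallyEq (Eventually.of_forall fun s => hfun s)
  have hval : (∫ t in a..b, F' s₀ t)
      = β i * Phi (Function.update β i (β i - 1)) (γ - 1) a b x := by
    rw [Phi_eq, ← intervalIntegral.integral_const_mul]
    apply intervalIntegral.integral_congr
    intro t ht
    have ht0 : 0 < t := mem_uIcc_pos ha hab.le ht
    have htne : (t : ℂ) ≠ 0 := Complex.ofReal_ne_zero.mpr ht0.ne'
    simp only
    rw [prod_pow_update (fun j => u x j t) β Finset.univ (Finset.mem_univ i) (β i - 1),
      show -(γ - 1) - 1 = (-γ - 1) + 1 by ring, Complex.cpow_add _ _ htne, Complex.cpow_one]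
    simp only [hF', hK, u, hs₀def]
    ring
  rw [← hval]
  exact h3

lemma hasDerivAt_gfun (α : Fin n → ℂ) (δ : ℂ) (x : (Fin 2 × Fin n) → ℝ)
    (hx : ∀ p, 0 < x p) {t : ℝ} (ht : 0 < t) :
    HasDerivAt (fun t : ℝ => gfun α δ t x)
      ((-δ * (t : ℂ) ^ (-δ - 1)) * (∏ j, u x j t ^ α j)
        + (t : ℂ) ^ (-δ) * ∑ j, (∏ l ∈ Finset.univ.erase j, u x l t ^ α l)
            * (α j * u x j t ^ (α j - 1) * (x (1, j) : ℂ))) t := by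
  have htm : ((t : ℝ) : ℂ) ∈ Complex.slitPlane := Complex.ofReal_mem_slitPlane.mpr ht
  have h1 : HasDerivAt (fun t : ℝ => (t : ℂ) ^ (-δ)) (-δ * (t : ℂ) ^ (-δ - 1)) t := by
    have := (Complex.hasStrictDerivAt_cpow_const (c := -δ) htm).hasDerivAt.comp t
      Complex.ofRealCLM.hasDerivAt
    simpa [Function.comp_def] using this
  have h2 : ∀ j ∈ Finset.univ, HasDerivAt (fun t : ℝ => u x j t ^ α j)
      (α j * u x j t ^ (α j - 1) * (x (1, j) : ℂ)) t := by
    intro j _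
    have hb : HasDerivAt (fun t : ℝ => u x j t) ((x (1, j) : ℝ) : ℂ) t := by
      have := ((Complex.ofRealCLM.hasDerivAt (x := t)).const_mul ((x (1, j) : ℝ) : ℂ)).const_add
        ((x (0, j) : ℝ) : ℂ)
      simpa [u] using this
    have := (Complex.hasStrictDerivAt_cpow_const (c := α j)
      (u_slit hx j ht)).hasDerivAt.comp t hb
    simpa [Function.comp_def] using this
  have h3 := HasDerivAt.fun_finset_prod h2
  have h4 := h1.fun_mul h3
  simpa [gfun, u, smul_eq_mul] using h4

lemma deriv_gfun_combination (α : Fin n → ℂ) (δ : ℂ) (k : Fin n)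
    (x : (Fin 2 × Fin n) → ℝ) (hx : ∀ p, 0 < x p) {t : ℝ} (ht : 0 < t) :
    HasDerivAt (fun t : ℝ => gfun α δ t x)
      (((∑ i, α i) - δ) * ((t : ℂ) ^ (-δ - 1) * ∏ j, u x j t ^ α j)
        - ∑ i ∈ Finset.univ.erase k,
            ((x (0, i) * x (1, k) - x (0, k) * x (1, i) : ℝ) : ℂ)
              * (α i * ((t : ℂ) ^ (-(δ - 1) - 1)
                  * ∏ j, u x j t
                      ^ (Function.update (Function.update α k (α k - 1)) i (α i - 1) j)))
        - (∑ i, α i) * (x (0, k) : ℂ)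
            * ((t : ℂ) ^ (-δ - 1) * ∏ j, u x j t ^ (Function.update α k (α k - 1) j))) t := by
  have htne : (t : ℂ) ≠ 0 := Complex.ofReal_ne_zero.mpr ht.ne'
  have hw0 : ∀ j, u x j t ≠ 0 := fun j => u_ne hx j ht
  have hsub : ∀ j : Fin n, u x j t ^ (α j - 1) = u x j t ^ α j * (u x j t)⁻¹ := fun j => by
    rw [Complex.cpow_sub _ _ (hw0 j), Complex.cpow_one, div_eq_mul_inv]
  have hcp := Complex.cpow_add (-δ - 1) 1 htne
  rw [Complex.cpow_one] at hcp
  have hT : (t : ℂ) ^ (-δ) = (t : ℂ) ^ (-δ - 1) * t := by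
    conv_lhs => rw [show (-δ : ℂ) = -δ - 1 + 1 from by ring]
    exact hcp
  have hT2 : (t : ℂ) ^ (-(δ - 1) - 1) = (t : ℂ) ^ (-δ - 1) * t := by
    conv_lhs => rw [show (-(δ - 1) - 1 : ℂ) = -δ - 1 + 1 from by ring]
    exact hcp
  convert hasDerivAt_gfun α δ x hx ht using 1
  rw [hT, hT2]
  have hE : ∀ j ∈ Finset.univ, (∏ l ∈ Finset.univ.erase j, u x l t ^ α l)
      * (α j * u x j t ^ (α j - 1) * (x (1, j) : ℂ))
      = (∏ l, u x l t ^ α l) * (α j * (x (1, j) : ℂ) * (u x j t)⁻¹) := by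
    intro j _
    rw [hsub j, ← Finset.mul_prod_erase Finset.univ (fun l => u x l t ^ α l)
      (Finset.mem_univ j)]
    ring
  rw [Finset.sum_congr rfl hE]
  have hMid : ∀ i ∈ Finset.univ.erase k,
      ((x (0, i) * x (1, k) - x (0, k) * x (1, i) : ℝ) : ℂ)
        * (α i * ((t : ℂ) ^ (-δ - 1) * (t : ℂ)
            * ∏ j, u x j t ^ (Function.update (Function.update α k (α k - 1)) i (α i - 1) j)))
      = ((t : ℂ) ^ (-δ - 1) * (t : ℂ) * (∏ l, u x l t ^ α l) * (x (1, k) : ℂ)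
            * (u x k t)⁻¹) * α i
        - ((t : ℂ) ^ (-δ - 1) * (t : ℂ) * (∏ l, u x l t ^ α l))
            * (α i * (x (1, i) : ℂ) * (u x i t)⁻¹) := by
    intro i hi
    have hik : i ≠ k := Finset.ne_of_mem_erase hi
    have hk' : k ∈ Finset.univ.erase i :=
      Finset.mem_erase.mpr ⟨Ne.symm hik, Finset.mem_univ k⟩
    have hci : ((x (0, i) * x (1, k) - x (0, k) * x (1, i) : ℝ) : ℂ)
        = u x i t * (x (1, k) : ℂ) - u x k t * (x (1, i) : ℂ) := by
      unfold u; push_cast; ring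
    have hP_i : (∏ l, u x l t ^ α l)
        = u x i t ^ α i * (u x k t ^ α k
            * ∏ j ∈ (Finset.univ.erase i).erase k, u x j t ^ α j) := by
      rw [← Finset.mul_prod_erase Finset.univ (fun l => u x l t ^ α l) (Finset.mem_univ i),
        ← Finset.mul_prod_erase (Finset.univ.erase i) (fun l => u x l t ^ α l) hk']
    rw [prod_pow_update (fun j => u x j t) (Function.update α k (α k - 1)) Finset.univ
        (Finset.mem_univ i) (α i - 1),
      prod_pow_update (fun j => u x j t) α (Finset.univ.erase i) hk' (α k - 1),
      hsub i, hsub k, hci, hP_i]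
    field_simp [hw0 i, hw0 k]
  rw [Finset.sum_congr rfl hMid, Finset.sum_sub_distrib, ← Finset.mul_sum, ← Finset.mul_sum,
    prod_pow_update (fun j => u x j t) α Finset.univ (Finset.mem_univ k) (α k - 1), hsub k,
    ← Finset.add_sum_erase Finset.univ α (Finset.mem_univ k),
    ← Finset.add_sum_erase Finset.univ
      (fun j => (∏ l, u x l t ^ α l) * (α j * (x (1, j) : ℂ) * (u x j t)⁻¹))
      (Finset.mem_univ k),
    ← Finset.mul_prod_erase Finset.univ (fun l => u x l t ^ α l) (Finset.mem_univ k)]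
  rw [← Finset.mul_sum]
  have hwk : u x k t = (x (0, k) : ℂ) + (x (1, k) : ℂ) * (t : ℂ) := rfl
  have hwkne : ((x (0, k) : ℂ) + (x (1, k) : ℂ) * (t : ℂ)) ≠ 0 := hwk ▸ hw0 k
  rw [hwk]
  field_simp [hwkne]
  ring


lemma ftc (α : Fin n → ℂ) (δ : ℂ) {a b : ℝ} (ha : 0 < a) (hab : a < b) (k : Fin n)
    (x : (Fin 2 × Fin n) → ℝ) (hx : ∀ p, 0 < x p) :
    gfun α δ b x - gfun α δ a x
      = ((∑ i, α i) - δ) * Phi α δ a b x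
        - ∑ i ∈ Finset.univ.erase k,
            ((x (0, i) * x (1, k) - x (0, k) * x (1, i) : ℝ) : ℂ)
              * (α i * Phi (Function.update (Function.update α k (α k - 1)) i (α i - 1))
                    (δ - 1) a b x)
        - (∑ i, α i) * (x (0, k) : ℂ) * Phi (Function.update α k (α k - 1)) δ a b x := by
  have hint1 : IntervalIntegrable
      (fun t : ℝ => ((∑ i, α i) - δ) * ((t : ℂ) ^ (-δ - 1) * ∏ j, u x j t ^ α j)) volume a b :=
    (intInt_kernel hx α (-δ - 1) ha hab.le).const_mul _
  have hint2 : ∀ i ∈ Finset.univ.erase k, IntervalIntegrable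
      (fun t : ℝ => ((x (0, i) * x (1, k) - x (0, k) * x (1, i) : ℝ) : ℂ)
        * (α i * ((t : ℂ) ^ (-(δ - 1) - 1)
            * ∏ j, u x j t ^ (Function.update (Function.update α k (α k - 1)) i (α i - 1) j))))
      volume a b := fun i _ =>
    ((intInt_kernel hx _ (-(δ - 1) - 1) ha hab.le).const_mul (α i)).const_mul _
  have hint3 : IntervalIntegrable
      (fun t : ℝ => (∑ i, α i) * (x (0, k) : ℂ)
        * ((t : ℂ) ^ (-δ - 1) * ∏ j, u x j t ^ (Function.update α k (α k - 1) j))) volume a b :=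
    (intInt_kernel hx _ (-δ - 1) ha hab.le).const_mul _
  have hEq : (∑ i ∈ Finset.univ.erase k, (fun t : ℝ =>
      ((x (0, i) * x (1, k) - x (0, k) * x (1, i) : ℝ) : ℂ)
        * (α i * ((t : ℂ) ^ (-(δ - 1) - 1)
            * ∏ j, u x j t ^ (Function.update (Function.update α k (α k - 1)) i (α i - 1) j)))))
      = (fun t : ℝ => ∑ i ∈ Finset.univ.erase k,
          ((x (0, i) * x (1, k) - x (0, k) * x (1, i) : ℝ) : ℂ)
            * (α i * ((t : ℂ) ^ (-(δ - 1) - 1)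
                * ∏ j, u x j t ^ (Function.update (Function.update α k (α k - 1)) i (α i - 1) j)))) := by
    funext t
    simp [Finset.sum_apply]
  have hintsum : IntervalIntegrable (fun t : ℝ => ∑ i ∈ Finset.univ.erase k,
      ((x (0, i) * x (1, k) - x (0, k) * x (1, i) : ℝ) : ℂ)
        * (α i * ((t : ℂ) ^ (-(δ - 1) - 1)
            * ∏ j, u x j t ^ (Function.update (Function.update α k (α k - 1)) i (α i - 1) j))))
      volume a b := hEq ▸ IntervalIntegrable.sum _ hint2
  have heq := intervalIntegral.integral_eq_sub_of_hasDerivAt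
    (f := fun t : ℝ => gfun α δ t x)
    (f' := fun t : ℝ => ((∑ i, α i) - δ) * ((t : ℂ) ^ (-δ - 1) * ∏ j, u x j t ^ α j)
        - ∑ i ∈ Finset.univ.erase k,
            ((x (0, i) * x (1, k) - x (0, k) * x (1, i) : ℝ) : ℂ)
              * (α i * ((t : ℂ) ^ (-(δ - 1) - 1)
                  * ∏ j, u x j t ^ (Function.update (Function.update α k (α k - 1)) i (α i - 1) j)))
        - (∑ i, α i) * (x (0, k) : ℂ)
            * ((t : ℂ) ^ (-δ - 1) * ∏ j, u x j t ^ (Function.update α k (α k - 1) j)))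
    (fun t ht => deriv_gfun_combination α δ k x hx (mem_uIcc_pos ha hab.le ht))
    ((hint1.sub hintsum).sub hint3)
  rw [← heq,
    intervalIntegral.integral_sub (hint1.sub hintsum) hint3,
    intervalIntegral.integral_sub hint1 hintsum,
    intervalIntegral.integral_const_mul,
    intervalIntegral.integral_finset_sum hint2,
    intervalIntegral.integral_const_mul]
  rw [Phi_eq α δ a b x, Phi_eq (Function.update α k (α k - 1)) δ a b x]
  congr 1
  refine congrArg₂ _ rfl ?_
  refine Finset.sum_congr rfl fun i _ => ?_
  rw [Phi_eq, intervalIntegral.integral_const_mul, intervalIntegral.integral_const_mul]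

end S17

/-- down shift with respect to `e_{n+1}`: applying
`S₁ = Σ_{i≠k} (x_{1i}x_{2k} − x_{1k}x_{2i})·∂_{2i} + (Σᵢ α_i)·x_{1k}` to
`x ↦ ∂Φ(α,δ+1;x)/∂x_{2k}` yields
`α_k·(Σᵢ α_i − δ)·Φ(α,δ;x) − α_k·[g(t,x)]_{t=a}^{t=b}`. -/
theorem stmt17 {n : ℕ} (hn : 1 ≤ n) (α : Fin n → ℂ) (δ : ℂ) (a b : ℝ)
    (ha : 0 < a) (hab : a < b) (hδ : 0 < (-δ - 2).re) (hα : ∀ k, 0 < (α k).re)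
    (k : Fin n) (x : (Fin 2 × Fin n) → ℝ) (hx : ∀ p, 0 < x p) :
    ∑ i ∈ Finset.univ \ {k},
        ((x (0, i) * x (1, k) - x (0, k) * x (1, i) : ℝ) : ℂ)
          * pd (1, i) (pd (1, k) (Phi α (δ + 1) a b)) x
      + (∑ i, α i) * (x (0, k) : ℂ) * pd (1, k) (Phi α (δ + 1) a b) x
      = α k * ((∑ i, α i) - δ) * Phi α δ a b x
        - α k * (gfun α δ b x - gfun α δ a x) := by
  classical
  have e1 : pd (1, k) (Phi α (δ + 1) a b) x
      = α k * Phi (Function.update α k (α k - 1)) δ a b x := by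
    have h := (S17.hasDerivAt_phi α (δ + 1) ha hab k x hx).deriv
    simp only [add_sub_cancel_right] at h
    exact h
  have e2 : ∀ i ∈ Finset.univ.erase k,
      pd (1, i) (pd (1, k) (Phi α (δ + 1) a b)) x
        = α k * (α i * Phi (Function.update (Function.update α k (α k - 1)) i (α i - 1))
            (δ - 1) a b x) := by
    intro i hi
    have hik : i ≠ k := Finset.ne_of_mem_erase hi
    have hev : (fun s : ℝ => pd (1, k) (Phi α (δ + 1) a b) (Function.update x (1, i) s))
        =ᶠ[nhds (x (1, i))]
        (fun s : ℝ => α k * Phi (Function.update α k (α k - 1)) δ a b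
          (Function.update x (1, i) s)) := by
      filter_upwards [eventually_gt_nhds (hx (1, i))] with s hs
      have hy : ∀ p, 0 < (Function.update x (1, i) s) p := S17.update_pos hx hs
      have h := (S17.hasDerivAt_phi α (δ + 1) ha hab k (Function.update x (1, i) s) hy).deriv
      simp only [add_sub_cancel_right] at h
      exact h
    have hstep : pd (1, i) (pd (1, k) (Phi α (δ + 1) a b)) x
        = deriv (fun s : ℝ => pd (1, k) (Phi α (δ + 1) a b) (Function.update x (1, i) s))
            (x (1, i)) := rfl
    rw [hstep, hev.deriv_eq]
    have hd := ((S17.hasDerivAt_phi (Function.update α k (α k - 1)) δ ha hab i x hx).const_mul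
      (α k)).deriv
    rw [hd]
    simp only [Function.update_of_ne hik]
  rw [Finset.sdiff_singleton_eq_erase]
  have hsum : ∑ i ∈ Finset.univ.erase k,
      ((x (0, i) * x (1, k) - x (0, k) * x (1, i) : ℝ) : ℂ)
        * pd (1, i) (pd (1, k) (Phi α (δ + 1) a b)) x
      = α k * ∑ i ∈ Finset.univ.erase k,
          ((x (0, i) * x (1, k) - x (0, k) * x (1, i) : ℝ) : ℂ)
            * (α i * Phi (Function.update (Function.update α k (α k - 1)) i (α i - 1))
                (δ - 1) a b x) := by
    rw [Finset.mul_sum]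
    refine Finset.sum_congr rfl fun i hi => ?_
    rw [e2 i hi]
    ring
  rw [hsum, e1]
  have h3 := S17.ftc α δ ha hab k x hx
  linear_combination (α k) * h3
end

section
/- (Contiguity: up shift with respect to e_{n+1}.) Fix k with 1 ≤ k ≤ n. Then at every point x with all coordinates positive, applying the operator S₂ = Σ_{i≠k} x_{1k}x_{2i}·∂/∂x_{1i} + x_{2k}·(Σ_{i≠k} x_{2i}·∂/∂x_{2i}) + α_k·x_{2k} to the function x ↦ ∂Φ(α, δ−1; x)/∂x_{1k} yields α_k·δ·Φ(α,δ;x) + α_k·[g(t,x)]_{t=a}^{t=b}. -/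
open Complex Function

section St18

variable {n : ℕ}

/-- linear factor as a real number cast to ℂ -/
noncomputable def Lfa (y : (Fin 2 × Fin n) → ℝ) (t : ℝ) (j : Fin n) : ℂ :=
  ((y (0,j) + y (1,j) * t : ℝ) : ℂ)

/-- integrand -/
noncomputable def Jf (β : Fin n → ℂ) (c : ℂ) (y : (Fin 2 × Fin n) → ℝ) (t : ℝ) : ℂ :=
  (t:ℂ) ^ c * ∏ j, Lfa y t j ^ β j

/-- the parametrized integral -/
noncomputable def II (a b : ℝ) (β : Fin n → ℂ) (c : ℂ) (y : (Fin 2 × Fin n) → ℝ) : ℂ :=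
  ∫ t in a..b, Jf β c y t

lemma Lfa_eq (y : (Fin 2 × Fin n) → ℝ) (t : ℝ) (j : Fin n) :
    ((y (0,j) : ℂ) + (y (1,j) : ℂ) * (t:ℂ)) = Lfa y t j := by
  unfold Lfa; push_cast; ring

lemma Lfa_pos {y : (Fin 2 × Fin n) → ℝ} (hy : ∀ p, 0 < y p) {t : ℝ} (ht : 0 < t) (j : Fin n) :
    0 < y (0,j) + y (1,j) * t := by
  have h1 := hy (0,j); have h2 := hy (1,j); positivity

lemma Lfa_slit {y : (Fin 2 × Fin n) → ℝ} (hy : ∀ p, 0 < y p) {t : ℝ} (ht : 0 < t) (j : Fin n) :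
    Lfa y t j ∈ slitPlane :=
  Complex.ofReal_mem_slitPlane.2 (Lfa_pos hy ht j)

lemma Lfa_ne {y : (Fin 2 × Fin n) → ℝ} (hy : ∀ p, 0 < y p) {t : ℝ} (ht : 0 < t) (j : Fin n) :
    Lfa y t j ≠ 0 :=
  Complex.slitPlane_ne_zero (Lfa_slit hy ht j)

lemma t_slit {t : ℝ} (ht : 0 < t) : (t:ℂ) ∈ slitPlane := Complex.ofReal_mem_slitPlane.2 ht

lemma t_ne {t : ℝ} (ht : 0 < t) : (t:ℂ) ≠ 0 := Complex.ofReal_ne_zero.2 ht.ne'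

lemma pos_upd {y : (Fin 2 × Fin n) → ℝ} (hy : ∀ p, 0 < y p) (p : Fin 2 × Fin n) {s : ℝ}
    (hs : 0 < s) : ∀ q, 0 < Function.update y p s q := by
  intro q
  rcases eq_or_ne q p with h | h
  · subst h; simp [hs]
  · rw [Function.update_of_ne h]; exact hy q

lemma Lfa_upd_ne {y : (Fin 2 × Fin n) → ℝ} {r : Fin 2} {i j : Fin n} (hj : j ≠ i) (s t : ℝ) :
    Lfa (Function.update y (r,i) s) t j = Lfa y t j := by
  unfold Lfa
  rw [Function.update_of_ne (by simp [Prod.ext_iff, hj]),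
    Function.update_of_ne (by simp [Prod.ext_iff, hj])]

/-- product with an updated exponent splits off the `i`-th factor -/
lemma prod_upd_exp (L : Fin n → ℂ) (β : Fin n → ℂ) (i : Fin n) (e : ℂ) :
    ∏ j, L j ^ (Function.update β i e j)
      = L i ^ e * ∏ j ∈ Finset.univ.erase i, L j ^ β j := by
  rw [← Finset.mul_prod_erase Finset.univ _ (Finset.mem_univ i), Function.update_self]
  congr 1
  exact Finset.prod_congr rfl fun j hj => by rw [Function.update_of_ne (Finset.ne_of_mem_erase hj)]

lemma ContinuousAt.finprod' {X : Type*} [TopologicalSpace X] {ι : Type*} [DecidableEq ι]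
    (s : Finset ι) (f : ι → X → ℂ) (x : X) (h : ∀ j ∈ s, ContinuousAt (f j) x) :
    ContinuousAt (fun y => ∏ j ∈ s, f j y) x := by
  classical
  induction s using Finset.induction with
  | empty => simpa using continuousAt_const
  | insert a s hni ih =>
    simp only [Finset.prod_insert hni]
    exact (h a (Finset.mem_insert_self a s)).mul
      (ih fun j hj => h j (Finset.mem_insert_of_mem hj))

end St18

section St18b

variable {n : ℕ}

lemma contAt_cpow_ofReal {X : Type*} [TopologicalSpace X] {f : X → ℝ} {t : X} (hf : ContinuousAt f t) (h : 0 < f t) (e : ℂ) :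
    ContinuousAt (fun u => ((f u : ℝ) : ℂ) ^ e) t :=
  (Complex.continuous_ofReal.continuousAt.comp hf).cpow continuousAt_const
    (Complex.ofReal_mem_slitPlane.2 h)

lemma contAt_Jf {y : (Fin 2 × Fin n) → ℝ} (hy : ∀ p, 0 < y p) (β : Fin n → ℂ) (c : ℂ)
    {t : ℝ} (ht : 0 < t) : ContinuousAt (Jf β c y) t := by
  unfold Jf Lfa
  refine ContinuousAt.mul (contAt_cpow_ofReal continuousAt_id ht c) ?_
  refine ContinuousAt.finprod' _ _ _ fun j _ => ?_
  exact contAt_cpow_ofReal (f := fun t => y (0,j) + y (1,j) * t) (by fun_prop)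
    (Lfa_pos hy ht j) (β j)

lemma uIcc_pos {a b : ℝ} (ha : 0 < a) (hab : a ≤ b) {t : ℝ} (ht : t ∈ Set.uIcc a b) : 0 < t := by
  rw [Set.uIcc_of_le hab] at ht
  exact lt_of_lt_of_le ha ht.1

lemma uIoc_pos {a b : ℝ} (ha : 0 < a) (hab : a ≤ b) {t : ℝ} (ht : t ∈ Set.uIoc a b) : 0 < t :=
  uIcc_pos ha hab (Set.uIoc_subset_uIcc ht)

lemma contOn_Jf {y : (Fin 2 × Fin n) → ℝ} (hy : ∀ p, 0 < y p) (β : Fin n → ℂ) (c : ℂ)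
    {S : Set ℝ} (hS : ∀ t ∈ S, (0:ℝ) < t) : ContinuousOn (Jf β c y) S :=
  fun t ht => (contAt_Jf hy β c (hS t ht)).continuousWithinAt

lemma intInt_Jf {y : (Fin 2 × Fin n) → ℝ} (hy : ∀ p, 0 < y p) (β : Fin n → ℂ) (c : ℂ)
    {a b : ℝ} (ha : 0 < a) (hab : a ≤ b) : IntervalIntegrable (Jf β c y) MeasureTheory.volume a b :=
  (contOn_Jf hy β c fun _ ht => uIcc_pos ha hab ht).intervalIntegrable

end St18b

section St18c

variable {n : ℕ}

lemma hasDerivAt_Jf_upd {y : (Fin 2 × Fin n) → ℝ} (hy : ∀ p, 0 < y p) {t : ℝ} (ht : 0 < t)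
    (β : Fin n → ℂ) (c : ℂ) (r : Fin 2) (i : Fin n) {s : ℝ} (hs : 0 < s) :
    HasDerivAt (fun u => Jf β c (Function.update y (r,i) u) t)
      (β i * Jf (Function.update β i (β i - 1)) (c + if r = 0 then 0 else 1)
        (Function.update y (r,i) s) t) s := by
  have hy' := pos_upd hy (r,i) hs
  set C : ℂ := ∏ j ∈ Finset.univ.erase i, Lfa y t j ^ β j with hC
  have hprodC : ∀ u : ℝ, ∏ j ∈ Finset.univ.erase i, Lfa (Function.update y (r,i) u) t j ^ β j
      = C := by
    intro u
    exact Finset.prod_congr rfl fun j hj => by rw [Lfa_upd_ne (Finset.ne_of_mem_erase hj)]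
  have hfun : (fun u => Jf β c (Function.update y (r,i) u) t)
      = fun u => (t:ℂ)^c * (Lfa (Function.update y (r,i) u) t i ^ β i * C) := by
    funext u
    unfold Jf
    rw [← Finset.mul_prod_erase Finset.univ _ (Finset.mem_univ i), hprodC]
  have hJ : Jf (Function.update β i (β i - 1)) (c + if r = 0 then 0 else 1)
      (Function.update y (r,i) s) t
      = (t:ℂ)^(c + if r = 0 then 0 else 1)
        * (Lfa (Function.update y (r,i) s) t i ^ (β i - 1) * C) := by
    unfold Jf
    rw [prod_upd_exp, hprodC]
  rw [hfun, hJ]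
  rcases eq_or_ne r 0 with rfl | hr
  · -- r = 0
    have hL : ∀ u : ℝ, Lfa (Function.update y ((0 : Fin 2),i) u) t i
        = (u:ℂ) + ((y (1,i) * t : ℝ) : ℂ) := by
      intro u
      unfold Lfa
      rw [Function.update_self, Function.update_of_ne (by simp)]
      push_cast; ring
    have hslit : ((s:ℝ):ℂ) + ((y (1,i) * t : ℝ) : ℂ) ∈ slitPlane := by
      rw [show ((s:ℝ):ℂ) + ((y (1,i) * t : ℝ) : ℂ) = ((s + y (1,i) * t : ℝ) : ℂ) by push_cast; ring]
      exact Complex.ofReal_mem_slitPlane.2 (by have := hy (1,i); positivity)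
    have h1 : HasDerivAt (fun z : ℂ => (z + ((y (1,i) * t : ℝ) : ℂ)) ^ β i)
        (β i * (((s:ℝ):ℂ) + ((y (1,i) * t : ℝ) : ℂ)) ^ (β i - 1) * 1) ((s:ℝ):ℂ) :=
      ((hasDerivAt_id _).add_const _).cpow_const (by simpa using hslit)
    have h2 := h1.comp_ofReal
    have h3 : HasDerivAt (fun u : ℝ => Lfa (Function.update y ((0 : Fin 2),i) u) t i ^ β i)
        (β i * (((s:ℝ):ℂ) + ((y (1,i) * t : ℝ) : ℂ)) ^ (β i - 1) * 1) s := by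
      simpa only [hL] using h2
    have h4 := (h3.mul_const C).const_mul ((t:ℂ)^c)
    convert h4 using 1; all_goals try rfl
    rw [hL s]
    rw [if_pos rfl, add_zero]
    ring
  · -- r = 1
    obtain rfl : r = 1 := Fin.eq_one_of_ne_zero r hr
    have hL : ∀ u : ℝ, Lfa (Function.update y ((1 : Fin 2),i) u) t i
        = ((y (0,i) : ℝ) : ℂ) + (u:ℂ) * (t:ℂ) := by
      intro u
      unfold Lfa
      rw [Function.update_self, Function.update_of_ne (by simp)]
      push_cast; ring
    have hslit : ((y (0,i) : ℝ) : ℂ) + ((s:ℝ):ℂ) * (t:ℂ) ∈ slitPlane := by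
      rw [show ((y (0,i) : ℝ) : ℂ) + ((s:ℝ):ℂ) * (t:ℂ) = ((y (0,i) + s * t : ℝ) : ℂ) by
        push_cast; ring]
      exact Complex.ofReal_mem_slitPlane.2 (by have := hy (0,i); positivity)
    have h1 : HasDerivAt (fun z : ℂ => (((y (0,i) : ℝ) : ℂ) + z * (t:ℂ)) ^ β i)
        (β i * (((y (0,i) : ℝ) : ℂ) + ((s:ℝ):ℂ) * (t:ℂ)) ^ (β i - 1) * (1 * (t:ℂ))) ((s:ℝ):ℂ) :=
      (((hasDerivAt_id _).mul_const _).const_add _).cpow_const (by simpa using hslit)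
    have h2 := h1.comp_ofReal
    have h3 : HasDerivAt (fun u : ℝ => Lfa (Function.update y ((1 : Fin 2),i) u) t i ^ β i)
        (β i * (((y (0,i) : ℝ) : ℂ) + ((s:ℝ):ℂ) * (t:ℂ)) ^ (β i - 1) * (1 * (t:ℂ))) s := by
      simpa only [hL] using h2
    have h4 := (h3.mul_const C).const_mul ((t:ℂ)^c)
    convert h4 using 1; all_goals try rfl
    rw [hL s]
    rw [if_neg one_ne_zero, Complex.cpow_add _ _ (t_ne ht), Complex.cpow_one]
    ring

end St18c

section St18d

variable {n : ℕ}

lemma continuous_upd (y : (Fin 2 × Fin n) → ℝ) (p z : Fin 2 × Fin n) :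
    Continuous (fun s : ℝ => Function.update y p s z) := by
  rcases eq_or_ne z p with rfl | h
  · simpa using continuous_id'
  · simp only [Function.update_of_ne h]; exact continuous_const

lemma contAt_Jf_pair {y : (Fin 2 × Fin n) → ℝ} (hy : ∀ p, 0 < y p) (β : Fin n → ℂ) (c : ℂ)
    (p : Fin 2 × Fin n) {s t : ℝ} (hs : 0 < s) (ht : 0 < t) :
    ContinuousAt (fun q : ℝ × ℝ => Jf β c (Function.update y p q.1) q.2) (s, t) := by
  unfold Jf Lfa
  refine ContinuousAt.mul ?_ ?_
  · exact (Complex.continuous_ofReal.comp continuous_snd).continuousAt.cpow continuousAt_const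
      (t_slit ht)
  · refine ContinuousAt.finprod' _ _ _ fun j _ => ?_
    refine contAt_cpow_ofReal
      (f := fun q : ℝ × ℝ => Function.update y p q.1 (0,j) + Function.update y p q.1 (1,j) * q.2)
      ?_ ?_ (β j)
    · exact (((continuous_upd y p (0,j)).comp continuous_fst).add
        (((continuous_upd y p (1,j)).comp continuous_fst).mul continuous_snd)).continuousAt
    · exact Lfa_pos (pos_upd hy p hs) ht j

lemma hasDerivAt_II_upd {a b : ℝ} (ha : 0 < a) (hab : a ≤ b) (β : Fin n → ℂ) (c : ℂ)
    (r : Fin 2) (i : Fin n) {y : (Fin 2 × Fin n) → ℝ} (hy : ∀ p, 0 < y p) :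
    HasDerivAt (fun s => II a b β c (Function.update y (r,i) s))
      (β i * II a b (Function.update β i (β i - 1)) (c + if r = 0 then 0 else 1) y)
      (y (r,i)) := by
  set p : Fin 2 × Fin n := (r,i) with hp
  set x₀ := y p with hx0
  have hx₀ : 0 < x₀ := hy p
  have hεpos : 0 < x₀ / 2 := by positivity
  set β' := Function.update β i (β i - 1) with hβ'
  set c' := c + if r = 0 then 0 else 1 with hc'
  have hball : ∀ s ∈ Metric.ball x₀ (x₀/2), 0 < s := by
    intro s hs
    rw [Metric.mem_ball, Real.dist_eq] at hs
    have := abs_lt.1 hs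
    linarith [this.1]
  obtain ⟨Cb, hCb⟩ : ∃ Cb, ∀ q ∈ (Set.Icc (x₀ - x₀/2) (x₀ + x₀/2)) ×ˢ (Set.uIcc a b),
      ‖β i * Jf β' c' (Function.update y p q.1) q.2‖ ≤ Cb := by
    apply (isCompact_Icc.prod isCompact_uIcc).exists_bound_of_continuousOn
    intro q hq
    have hq1 : 0 < q.1 := by have := hq.1.1; linarith
    have hq2 : 0 < q.2 := uIcc_pos ha hab hq.2
    exact (continuousAt_const.mul (contAt_Jf_pair hy β' c' p hq1 hq2)).continuousWithinAt
  have key := intervalIntegral.hasDerivAt_integral_of_dominated_loc_of_deriv_le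
    (μ := MeasureTheory.volume) (F := fun s t => Jf β c (Function.update y p s) t)
    (F' := fun s t => β i * Jf β' c' (Function.update y p s) t) (x₀ := x₀)
    (bound := fun _ => Cb) (a := a) (b := b) (s := Metric.ball x₀ (x₀/2)) (Metric.ball_mem_nhds x₀ hεpos)
    ?_ ?_ ?_ ?_ ?_ ?_
  · have h2 := key.2
    simp only [hx0, Function.update_eq_self] at h2
    rw [intervalIntegral.integral_const_mul] at h2
    exact h2
  · filter_upwards [Metric.ball_mem_nhds x₀ hεpos] with s hs
    exact (contOn_Jf (pos_upd hy p (hball s hs)) β c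
      (fun t ht => uIoc_pos ha hab ht)).aestronglyMeasurable measurableSet_uIoc
  · simp only [hx0, Function.update_eq_self]
    exact intInt_Jf hy β c ha hab
  · simp only [hx0, Function.update_eq_self]
    exact (continuousOn_const.mul (contOn_Jf hy β' c'
      (fun t ht => uIoc_pos ha hab ht))).aestronglyMeasurable measurableSet_uIoc
  · refine MeasureTheory.ae_of_all _ fun t ht s hs => ?_
    refine hCb (s, t) ⟨?_, Set.uIoc_subset_uIcc ht⟩
    rw [Metric.mem_ball, Real.dist_eq] at hs
    have := abs_lt.1 hs
    constructor <;> [linarith [this.1]; linarith [this.2]]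
  · exact intervalIntegrable_const
  · refine MeasureTheory.ae_of_all _ fun t ht s hs => ?_
    exact hasDerivAt_Jf_upd hy (uIoc_pos ha hab ht) β c r i (hball s hs)

end St18d

section St18e

variable {n : ℕ}

lemma pd_II {a b : ℝ} (ha : 0 < a) (hab : a ≤ b) (β : Fin n → ℂ) (c : ℂ)
    (r : Fin 2) (i : Fin n) {y : (Fin 2 × Fin n) → ℝ} (hy : ∀ p, 0 < y p) :
    pd (r,i) (II a b β c) y
      = β i * II a b (Function.update β i (β i - 1)) (c + if r = 0 then 0 else 1) y :=
  (hasDerivAt_II_upd ha hab β c r i hy).deriv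

lemma pd_pd_II {a b : ℝ} (ha : 0 < a) (hab : a ≤ b) (β : Fin n → ℂ) (c : ℂ)
    (r : Fin 2) (i k : Fin n) {y : (Fin 2 × Fin n) → ℝ} (hy : ∀ p, 0 < y p) :
    pd (r,i) (pd ((0 : Fin 2),k) (II a b β c)) y
      = β k * ((Function.update β k (β k - 1)) i
          * II a b (Function.update (Function.update β k (β k - 1)) i
              ((Function.update β k (β k - 1)) i - 1)) (c + if r = 0 then 0 else 1) y) := by
  unfold pd
  have hev : (fun s => deriv (fun u => II a b β c
        (Function.update (Function.update y (r,i) s) (0,k) u))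
        (Function.update y (r,i) s (0,k)))
      =ᶠ[nhds (y (r,i))]
      (fun s => β k * II a b (Function.update β k (β k - 1)) c
        (Function.update y (r,i) s)) := by
    filter_upwards [eventually_gt_nhds (hy (r,i))] with s hs
    have h := (hasDerivAt_II_upd ha hab β c 0 k (pos_upd hy (r,i) hs)).deriv
    rw [if_pos rfl, add_zero] at h
    exact h
  rw [hev.deriv_eq]
  exact ((hasDerivAt_II_upd ha hab (Function.update β k (β k - 1)) c r i hy).const_mul
    (β k)).deriv

end St18e

section St18f

variable {n : ℕ}

/-- the `t`-derivative of the product `∏ⱼ Lⱼ^{αⱼ}` -/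
noncomputable def Sd (α : Fin n → ℂ) (x : (Fin 2 × Fin n) → ℝ) (t : ℝ) : ℂ :=
  ∑ j, (∏ j' ∈ Finset.univ.erase j, Lfa x t j' ^ α j')
    * (α j * Lfa x t j ^ (α j - 1) * (x (1,j) : ℂ))

lemma hasDerivAt_prod_t {x : (Fin 2 × Fin n) → ℝ} (hx : ∀ p, 0 < x p) (α : Fin n → ℂ)
    {t : ℝ} (ht : 0 < t) :
    HasDerivAt (fun u : ℝ => ∏ j, Lfa x u j ^ α j) (Sd α x t) t := by
  have h : ∀ j ∈ Finset.univ, HasDerivAt (fun u : ℝ => Lfa x u j ^ α j)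
      (α j * Lfa x t j ^ (α j - 1) * ((x (1,j) : ℂ) * 1)) t := by
    intro j _
    have h1 : HasDerivAt (fun z : ℂ => (((x (0,j) : ℝ) : ℂ) + ((x (1,j) : ℝ) : ℂ) * z) ^ α j)
        (α j * (((x (0,j) : ℝ) : ℂ) + ((x (1,j) : ℝ) : ℂ) * ((t:ℝ):ℂ)) ^ (α j - 1)
          * ((x (1,j) : ℂ) * 1)) ((t:ℝ):ℂ) := by
      refine HasDerivAt.cpow_const (((hasDerivAt_id _).const_mul _).const_add _) ?_
      rw [Lfa_eq]
      exact Lfa_slit hx ht j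
    have h2 := h1.comp_ofReal
    simp only [Lfa_eq] at h2
    exact h2
  have H := HasDerivAt.fun_finsetProd h
  have : (∑ j ∈ Finset.univ, (∏ j' ∈ Finset.univ.erase j, Lfa x t j' ^ α j')
      • (α j * Lfa x t j ^ (α j - 1) * ((x (1,j) : ℂ) * 1))) = Sd α x t := by
    unfold Sd
    refine Finset.sum_congr rfl fun j _ => ?_
    rw [smul_eq_mul, mul_one]
  rw [this] at H
  exact H

lemma hasDerivAt_Jf_t {x : (Fin 2 × Fin n) → ℝ} (hx : ∀ p, 0 < x p) (α : Fin n → ℂ) (δ : ℂ)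
    {t : ℝ} (ht : 0 < t) :
    HasDerivAt (fun u : ℝ => Jf α (-δ) x u)
      (-δ * (t:ℂ) ^ (-δ - 1) * ∏ j, Lfa x t j ^ α j + (t:ℂ) ^ (-δ) * Sd α x t) t := by
  have hpow : HasDerivAt (fun u : ℝ => ((u:ℝ):ℂ) ^ (-δ)) (-δ * (t:ℂ) ^ (-δ - 1)) t := by
    have h1 : HasDerivAt (fun z : ℂ => z ^ (-δ)) (-δ * ((t:ℝ):ℂ) ^ (-δ - 1) * 1) ((t:ℝ):ℂ) :=
      (hasDerivAt_id _).cpow_const (t_slit ht)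
    simpa using h1.comp_ofReal
  exact hpow.mul (hasDerivAt_prod_t hx α ht)

lemma ContinuousAt.finsum' {X : Type*} [TopologicalSpace X] {ι : Type*} [DecidableEq ι]
    (s : Finset ι) (f : ι → X → ℂ) (x : X) (h : ∀ j ∈ s, ContinuousAt (f j) x) :
    ContinuousAt (fun y => ∑ j ∈ s, f j y) x := by
  classical
  induction s using Finset.induction with
  | empty => simpa using continuousAt_const
  | insert a s hni ih =>
    simp only [Finset.sum_insert hni]
    exact (h a (Finset.mem_insert_self a s)).add
      (ih fun j hj => h j (Finset.mem_insert_of_mem hj))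

lemma contAt_Lfa_cpow {x : (Fin 2 × Fin n) → ℝ} (hx : ∀ p, 0 < x p)
    {t : ℝ} (ht : 0 < t) (j : Fin n) (e : ℂ) :
    ContinuousAt (fun u : ℝ => Lfa x u j ^ e) t := by
  unfold Lfa
  exact contAt_cpow_ofReal (f := fun u => x (0,j) + x (1,j) * u) (by fun_prop)
    (Lfa_pos hx ht j) e

lemma contAt_Sd {x : (Fin 2 × Fin n) → ℝ} (hx : ∀ p, 0 < x p) (α : Fin n → ℂ)
    {t : ℝ} (ht : 0 < t) : ContinuousAt (Sd α x) t := by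
  unfold Sd
  refine ContinuousAt.finsum' _ _ _ fun j _ => ContinuousAt.mul ?_ ?_
  · exact ContinuousAt.finprod' _ _ _ fun j' _ => contAt_Lfa_cpow hx ht j' (α j')
  · exact (continuousAt_const.mul (contAt_Lfa_cpow hx ht j (α j - 1))).mul continuousAt_const

lemma contAt_D {x : (Fin 2 × Fin n) → ℝ} (hx : ∀ p, 0 < x p) (α : Fin n → ℂ) (δ : ℂ)
    {t : ℝ} (ht : 0 < t) :
    ContinuousAt (fun t : ℝ =>
      -δ * (t:ℂ) ^ (-δ - 1) * ∏ j, Lfa x t j ^ α j + (t:ℂ) ^ (-δ) * Sd α x t) t := by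
  refine ContinuousAt.add (ContinuousAt.mul ?_ ?_) (ContinuousAt.mul ?_ (contAt_Sd hx α ht))
  · exact continuousAt_const.mul (contAt_cpow_ofReal continuousAt_id ht _)
  · exact ContinuousAt.finprod' _ _ _ fun j _ => contAt_Lfa_cpow hx ht j (α j)
  · exact contAt_cpow_ofReal continuousAt_id ht _

lemma ftc_gfun {x : (Fin 2 × Fin n) → ℝ} (hx : ∀ p, 0 < x p) (α : Fin n → ℂ) (δ : ℂ)
    {a b : ℝ} (ha : 0 < a) (hab : a ≤ b) :
    ∫ t in a..b, (-δ * (t:ℂ) ^ (-δ - 1) * ∏ j, Lfa x t j ^ α j + (t:ℂ) ^ (-δ) * Sd α x t)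
      = Jf α (-δ) x b - Jf α (-δ) x a := by
  refine intervalIntegral.integral_eq_sub_of_hasDerivAt
    (fun t htt => hasDerivAt_Jf_t hx α δ (uIcc_pos ha hab htt)) ?_
  exact ContinuousOn.intervalIntegrable fun t htt =>
    (contAt_D hx α δ (uIcc_pos ha hab htt)).continuousWithinAt

end St18f

section St18g

variable {n : ℕ}

lemma integrand_id {x : (Fin 2 × Fin n) → ℝ} (hx : ∀ p, 0 < x p) (α : Fin n → ℂ) (δ : ℂ)
    (k : Fin n) {t : ℝ} (ht : 0 < t) :
    (∑ i ∈ Finset.univ \ {k}, ((x (0,k) * x (1,i) : ℝ) : ℂ)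
        * (α k * (Function.update α k (α k - 1) i
            * Jf (Function.update (Function.update α k (α k - 1)) i
                (Function.update α k (α k - 1) i - 1)) (-δ) x t)))
      + ((x (1,k) : ℂ) * ∑ i ∈ Finset.univ \ {k}, (x (1,i) : ℂ)
        * (α k * (Function.update α k (α k - 1) i
            * Jf (Function.update (Function.update α k (α k - 1)) i
                (Function.update α k (α k - 1) i - 1)) (-δ + 1) x t)))
      + α k * (x (1,k) : ℂ) * (α k * Jf (Function.update α k (α k - 1)) (-δ) x t)
      = α k * δ * Jf α (-δ - 1) x t
        + α k * (-δ * (t:ℂ) ^ (-δ - 1) * ∏ j, Lfa x t j ^ α j + (t:ℂ) ^ (-δ) * Sd α x t) := by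
  classical
  have hLne : ∀ j, Lfa x t j ≠ 0 := fun j => Lfa_ne hx ht j
  set L : Fin n → ℂ := Lfa x t with hL
  set R : Fin n → ℂ := fun i => ∏ j, L j ^ (Function.update α i (α i - 1) j) with hRdef
  have hkey : ∀ i, i ≠ k →
      L k * ∏ j, L j ^ (Function.update (Function.update α k (α k - 1)) i (α i - 1) j)
        = R i := by
    intro i hik
    rw [Function.update_comm (Ne.symm hik)]
    rw [prod_upd_exp L (Function.update α i (α i - 1)) k (α k - 1)]
    have hsplit : R i = L k ^ (Function.update α i (α i - 1) k)
        * ∏ j ∈ Finset.univ.erase k, L j ^ (Function.update α i (α i - 1) j) :=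
      (Finset.mul_prod_erase Finset.univ
        (fun j => L j ^ (Function.update α i (α i - 1) j)) (Finset.mem_univ k)).symm
    rw [hsplit, Function.update_of_ne (Ne.symm hik)]
    rw [← mul_assoc]
    congr 1
    rw [Complex.cpow_sub _ _ (hLne k), Complex.cpow_one]
    rw [mul_div_assoc']
    exact mul_div_cancel_left₀ _ (hLne k)
  have hRsplit : ∀ i, R i = L i ^ (α i - 1) * ∏ j ∈ Finset.univ.erase i, L j ^ α j :=
    fun i => prod_upd_exp L α i (α i - 1)
  have hSd : Sd α x t = ∑ j, α j * (x (1,j) : ℂ) * R j := by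
    unfold Sd
    refine Finset.sum_congr rfl fun j _ => ?_
    rw [hRsplit j, ← hL]
    ring
  have ht1 : (t:ℂ) ^ (-δ + 1) = (t:ℂ) ^ (-δ) * t := by
    rw [Complex.cpow_add _ _ (t_ne ht), Complex.cpow_one]
  simp only [Jf, ← hL]
  rw [Finset.mul_sum, ← Finset.sum_add_distrib]
  have hterm : ∀ i ∈ Finset.univ \ {k},
      ((x (0,k) * x (1,i) : ℝ) : ℂ)
          * (α k * (Function.update α k (α k - 1) i
              * ((t:ℂ) ^ (-δ) * ∏ j, L j ^ (Function.update (Function.update α k (α k - 1)) i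
                  (Function.update α k (α k - 1) i - 1) j))))
        + (x (1,k) : ℂ) * ((x (1,i) : ℂ)
          * (α k * (Function.update α k (α k - 1) i
              * ((t:ℂ) ^ (-δ + 1) * ∏ j, L j ^ (Function.update (Function.update α k (α k - 1)) i
                  (Function.update α k (α k - 1) i - 1) j)))))
        = α k * (t:ℂ) ^ (-δ) * (α i * (x (1,i) : ℂ) * R i) := by
    intro i hi
    have hik : i ≠ k := by
      rw [Finset.mem_sdiff, Finset.mem_singleton] at hi
      exact hi.2
    have hLk : L k = (x (0,k) : ℂ) + (x (1,k) : ℂ) * (t:ℂ) := (Lfa_eq x t k).symm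
    rw [Function.update_of_ne hik, ht1, ← hkey i hik, hLk]
    push_cast
    ring
  rw [Finset.sum_congr rfl hterm]
  have hkterm : α k * (x (1,k) : ℂ)
      * (α k * ((t:ℂ) ^ (-δ) * ∏ j, L j ^ (Function.update α k (α k - 1) j)))
      = α k * (t:ℂ) ^ (-δ) * (α k * (x (1,k) : ℂ) * R k) := by
    rw [hRdef]
    ring
  rw [hkterm]
  have hsum : (∑ i ∈ Finset.univ \ {k}, α k * (t:ℂ) ^ (-δ) * (α i * (x (1,i) : ℂ) * R i))
      + α k * (t:ℂ) ^ (-δ) * (α k * (x (1,k) : ℂ) * R k)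
      = α k * (t:ℂ) ^ (-δ) * ∑ j, α j * (x (1,j) : ℂ) * R j := by
    rw [Finset.sdiff_singleton_eq_erase, Finset.mul_sum]
    exact Finset.sum_erase_add Finset.univ _ (Finset.mem_univ k)
  rw [hsum, hSd]
  ring
end St18g

/-- up shift with respect to `e_{n+1}`: applying
`S₂ = Σ_{i≠k} x_{1k}x_{2i}·∂_{1i} + x_{2k}·(Σ_{i≠k} x_{2i}·∂_{2i}) + α_k·x_{2k}` to
`x ↦ ∂Φ(α,δ−1;x)/∂x_{1k}` yields `α_k·δ·Φ(α,δ;x) + α_k·[g(t,x)]_{t=a}^{t=b}`. -/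
theorem stmt18 {n : ℕ} (hn : 1 ≤ n) (α : Fin n → ℂ) (δ : ℂ) (a b : ℝ)
    (ha : 0 < a) (hab : a < b) (hδ : 0 < (-δ - 1).re) (hα : ∀ k, 1 < (α k).re)
    (k : Fin n) (x : (Fin 2 × Fin n) → ℝ) (hx : ∀ p, 0 < x p) :
    ∑ i ∈ Finset.univ \ {k},
        ((x (0, k) * x (1, i) : ℝ) : ℂ)
          * pd (0, i) (pd (0, k) (Phi α (δ - 1) a b)) x
      + (x (1, k) : ℂ) * ∑ i ∈ Finset.univ \ {k},
          (x (1, i) : ℂ) * pd (1, i) (pd (0, k) (Phi α (δ - 1) a b)) x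
      + α k * (x (1, k) : ℂ) * pd (0, k) (Phi α (δ - 1) a b) x
      = α k * δ * Phi α δ a b x + α k * (gfun α δ b x - gfun α δ a x) := by
  classical
  have hab' : a ≤ b := hab.le
  have hPhi : Phi α (δ - 1) a b = II a b α (-δ) := by
    funext z
    unfold Phi II Jf
    simp only [show (-(δ - 1) - 1 : ℂ) = -δ from by ring, Lfa_eq]
  have hPhi2 : Phi α δ a b x = ∫ t in a..b, Jf α (-δ - 1) x t := by
    unfold Phi Jf
    simp only [Lfa_eq]
  have hgf : ∀ t : ℝ, gfun α δ t x = Jf α (-δ) x t := by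
    intro t
    unfold gfun Jf
    simp only [Lfa_eq]
  rw [hPhi]
  have e1 : ∑ i ∈ Finset.univ \ {k}, ((x (0,k) * x (1,i) : ℝ):ℂ)
        * pd (0,i) (pd ((0 : Fin 2),k) (II a b α (-δ))) x
      = ∫ t in a..b, ∑ i ∈ Finset.univ \ {k}, ((x (0,k) * x (1,i) : ℝ):ℂ)
        * (α k * (Function.update α k (α k - 1) i
            * Jf (Function.update (Function.update α k (α k - 1)) i
                (Function.update α k (α k - 1) i - 1)) (-δ) x t)) := by
    rw [intervalIntegral.integral_finset_sum]
    · refine Finset.sum_congr rfl fun i _ => ?_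
      rw [pd_pd_II ha hab' α (-δ) 0 i k hx, if_pos rfl, add_zero]
      unfold II
      rw [intervalIntegral.integral_const_mul, intervalIntegral.integral_const_mul,
        intervalIntegral.integral_const_mul]
    · intro i _
      exact (((intInt_Jf hx _ _ ha hab').const_mul _).const_mul _).const_mul _
  have e2 : (x (1,k) : ℂ) * ∑ i ∈ Finset.univ \ {k}, (x (1,i):ℂ)
        * pd (1,i) (pd ((0 : Fin 2),k) (II a b α (-δ))) x
      = ∫ t in a..b, (x (1,k) : ℂ) * ∑ i ∈ Finset.univ \ {k}, (x (1,i):ℂ)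
        * (α k * (Function.update α k (α k - 1) i
            * Jf (Function.update (Function.update α k (α k - 1)) i
                (Function.update α k (α k - 1) i - 1)) (-δ + 1) x t)) := by
    rw [intervalIntegral.integral_const_mul]
    congr 1
    rw [intervalIntegral.integral_finset_sum]
    · refine Finset.sum_congr rfl fun i _ => ?_
      rw [pd_pd_II ha hab' α (-δ) 1 i k hx, if_neg one_ne_zero]
      unfold II
      rw [intervalIntegral.integral_const_mul, intervalIntegral.integral_const_mul,
        intervalIntegral.integral_const_mul]
    · intro i _
      exact (((intInt_Jf hx _ _ ha hab').const_mul _).const_mul _).const_mul _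
  have e3 : α k * (x (1,k) : ℂ) * pd ((0 : Fin 2),k) (II a b α (-δ)) x
      = ∫ t in a..b, α k * (x (1,k) : ℂ)
          * (α k * Jf (Function.update α k (α k - 1)) (-δ) x t) := by
    rw [intervalIntegral.integral_const_mul]
    congr 1
    rw [pd_II ha hab' α (-δ) 0 k hx, if_pos rfl, add_zero]
    unfold II
    rw [intervalIntegral.integral_const_mul]
  have r1 : α k * δ * Phi α δ a b x
      = ∫ t in a..b, α k * δ * Jf α (-δ - 1) x t := by
    rw [intervalIntegral.integral_const_mul, hPhi2]
  have r2 : α k * (gfun α δ b x - gfun α δ a x)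
      = ∫ t in a..b, α k * (-δ * (t:ℂ) ^ (-δ - 1) * ∏ j, Lfa x t j ^ α j
          + (t:ℂ) ^ (-δ) * Sd α x t) := by
    rw [intervalIntegral.integral_const_mul, hgf, hgf, ← ftc_gfun hx α δ ha hab']
  rw [e1, e2, e3, r1, r2]
  have int1 : IntervalIntegrable (fun t => ∑ i ∈ Finset.univ \ {k},
      ((x (0,k) * x (1,i) : ℝ):ℂ) * (α k * (Function.update α k (α k - 1) i
        * Jf (Function.update (Function.update α k (α k - 1)) i
            (Function.update α k (α k - 1) i - 1)) (-δ) x t))) MeasureTheory.volume a b := by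
    refine ContinuousOn.intervalIntegrable fun t htt => ?_
    have ht := uIcc_pos ha hab' htt
    refine (ContinuousAt.finsum' _ _ _ fun i _ => ?_).continuousWithinAt
    exact continuousAt_const.mul (continuousAt_const.mul
      (continuousAt_const.mul (contAt_Jf hx _ _ ht)))
  have int2 : IntervalIntegrable (fun t => (x (1,k) : ℂ) * ∑ i ∈ Finset.univ \ {k},
      (x (1,i):ℂ) * (α k * (Function.update α k (α k - 1) i
        * Jf (Function.update (Function.update α k (α k - 1)) i
            (Function.update α k (α k - 1) i - 1)) (-δ + 1) x t))) MeasureTheory.volume a b := by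
    refine ContinuousOn.intervalIntegrable fun t htt => ?_
    have ht := uIcc_pos ha hab' htt
    refine (continuousAt_const.mul (ContinuousAt.finsum' _ _ _ fun i _ => ?_)).continuousWithinAt
    exact continuousAt_const.mul (continuousAt_const.mul
      (continuousAt_const.mul (contAt_Jf hx _ _ ht)))
  have int3 : IntervalIntegrable (fun t => α k * (x (1,k) : ℂ)
      * (α k * Jf (Function.update α k (α k - 1)) (-δ) x t)) MeasureTheory.volume a b :=
    ((intInt_Jf hx _ _ ha hab').const_mul _).const_mul _
  have intR1 : IntervalIntegrable (fun t => α k * δ * Jf α (-δ - 1) x t)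
      MeasureTheory.volume a b := (intInt_Jf hx _ _ ha hab').const_mul _
  have intR2 : IntervalIntegrable (fun t => α k * (-δ * (t:ℂ) ^ (-δ - 1)
      * ∏ j, Lfa x t j ^ α j + (t:ℂ) ^ (-δ) * Sd α x t)) MeasureTheory.volume a b := by
    refine ContinuousOn.intervalIntegrable fun t htt => ?_
    exact (continuousAt_const.mul (contAt_D hx α δ (uIcc_pos ha hab' htt))).continuousWithinAt
  rw [← intervalIntegral.integral_add int1 int2, ← intervalIntegral.integral_add (int1.add int2) int3,
    ← intervalIntegral.integral_add intR1 intR2]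
  refine intervalIntegral.integral_congr fun t htt => ?_
  exact integrand_id hx α δ k (uIcc_pos ha hab' htt)
end
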